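/- arXiv:0902.4324 — 5 statements merged into one kernel-verified Lean document; each statement's English description precedes it below -/
import Mathlib

section
/- Let T > 0 and let φ : [0,T]² → ℝ be a measurable symmetric kernel satisfying condition (C_R) with exponent p ∈ (1,∞) and constant C > 0, and assume φ is positive semidefinite in the integral sense. Let (H,⟨·,·⟩_H) be a separable real Hilbert space. Then for every f ∈ L^p([0,T];H): ∫_0^T ∫_0^T ⟨f(u), f(v)⟩_H φ(u,v) du dv ≥ 0 (the double integral being absolutely convergent). -/
open MeasureTheory Set
open scoped RealInnerProductSpace

/-- If the measurable symmetric kernel `φ` on `[0,T]²` satisfies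
condition `(C_R)` with exponent `p ∈ (1,∞)` and constant `C > 0` and is positive
semidefinite in the integral sense, and `H` is a separable real Hilbert space, then
for every `f ∈ L^p([0,T];H)` the double integral `∫_0^T ∫_0^T ⟨f(u), f(v)⟩_H φ(u,v) du dv`
is absolutely convergent and nonnegative. -/
theorem stmt_5
    {H : Type*} [NormedAddCommGroup H] [InnerProductSpace ℝ H] [CompleteSpace H]
    [SecondCountableTopology H]
    (T : ℝ) (hT : 0 < T) (φ : ℝ → ℝ → ℝ) (hφmeas : Measurable (Function.uncurry φ))
    (hφsymm : ∀ u v, φ u v = φ v u)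
    (p : ℝ) (hp : 1 < p) (C : ℝ) (hC : 0 < C)
    (hCR : ∀ f : ℝ → ℝ, MemLp f (ENNReal.ofReal p) (volume.restrict (Set.Icc 0 T)) →
      ∫⁻ u in Set.Icc (0 : ℝ) T, ∫⁻ v in Set.Icc (0 : ℝ) T,
          ENNReal.ofReal |f u * f v * φ u v|
        ≤ ENNReal.ofReal
            (C * ((∫ u in Set.Icc (0 : ℝ) T, |f u| ^ p) ^ (1 / p)) ^ 2))
    (hpos : ∀ f : ℝ → ℝ, MemLp f (ENNReal.ofReal p) (volume.restrict (Set.Icc 0 T)) →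
      0 ≤ ∫ u in Set.Icc (0 : ℝ) T, ∫ v in Set.Icc (0 : ℝ) T, f u * f v * φ u v)
    (f : ℝ → H)
    (hf : MemLp f (ENNReal.ofReal p) (volume.restrict (Set.Icc 0 T))) :
    IntegrableOn (fun q : ℝ × ℝ => ⟪f q.1, f q.2⟫ * φ q.1 q.2)
        (Set.Icc (0 : ℝ) T ×ˢ Set.Icc (0 : ℝ) T) volume ∧
      0 ≤ ∫ u in Set.Icc (0 : ℝ) T, ∫ v in Set.Icc (0 : ℝ) T, ⟪f u, f v⟫ * φ u v := by
  have hfm := hf.aestronglyMeasurable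
  set μ : Measure ℝ := volume.restrict (Set.Icc (0:ℝ) T) with hμdef
  -- a measurable representative of `‖f ·‖`
  set g : ℝ → ℝ := fun u => ‖hfm.mk f u‖ with hgdef
  have hgmeas : Measurable g := hfm.stronglyMeasurable_mk.norm.measurable
  have hgg : (fun u => ‖f u‖) =ᵐ[μ] g := hfm.ae_eq_mk.mono fun x hx => by
    simp only [hgdef, hx]
  have hgLp : MemLp g (ENNReal.ofReal p) μ := hf.norm.ae_eq hgg
  have hgi := hCR g hgLp
  have hprodμ : (volume : Measure (ℝ × ℝ)).restrict
      (Set.Icc (0:ℝ) T ×ˢ Set.Icc (0:ℝ) T) = μ.prod μ := by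
    rw [Measure.volume_eq_prod, ← Measure.prod_restrict]
  have hφm : Measurable fun q : ℝ × ℝ => φ q.1 q.2 := hφmeas
  have hBm : Measurable fun q : ℝ × ℝ => ENNReal.ofReal |g q.1 * g q.2 * φ q.1 q.2| :=
    (((hgmeas.comp measurable_fst).mul (hgmeas.comp measurable_snd)).mul hφm).abs.ennreal_ofReal
  have hBfin : ∫⁻ q, ENNReal.ofReal |g q.1 * g q.2 * φ q.1 q.2| ∂(μ.prod μ) < ⊤ := by
    rw [MeasureTheory.lintegral_prod _ hBm.aemeasurable]
    exact lt_of_le_of_lt hgi ENNReal.ofReal_lt_top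
  -- the integrable dominating function on the product
  have hgnn : ∀ u, 0 ≤ g u := fun u => norm_nonneg _
  have hBint : Integrable (fun q : ℝ × ℝ => g q.1 * g q.2 * |φ q.1 q.2|) (μ.prod μ) := by
    refine ⟨(((hgmeas.comp measurable_fst).mul (hgmeas.comp measurable_snd)).mul
      hφm.abs).aestronglyMeasurable, ?_⟩
    rw [hasFiniteIntegral_iff_ofReal (Filter.Eventually.of_forall fun q =>
      mul_nonneg (mul_nonneg (hgnn _) (hgnn _)) (abs_nonneg _))]
    have : ∀ q : ℝ × ℝ, ENNReal.ofReal (g q.1 * g q.2 * |φ q.1 q.2|)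
        = ENNReal.ofReal |g q.1 * g q.2 * φ q.1 q.2| := by
      intro q
      congr 1
      rw [abs_mul, abs_mul, abs_of_nonneg (hgnn _), abs_of_nonneg (hgnn _)]
    simpa only [this] using hBfin
  -- a.e. equality on the product
  have h1 : (fun q : ℝ × ℝ => f q.1) =ᵐ[μ.prod μ] fun q => hfm.mk f q.1 :=
    Measure.quasiMeasurePreserving_fst.ae_eq_comp hfm.ae_eq_mk
  have h2 : (fun q : ℝ × ℝ => f q.2) =ᵐ[μ.prod μ] fun q => hfm.mk f q.2 :=
    Measure.quasiMeasurePreserving_snd.ae_eq_comp hfm.ae_eq_mk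
  have hae : ∀ᵐ q ∂(μ.prod μ), ‖f q.1‖ = g q.1 ∧ ‖f q.2‖ = g q.2 := by
    filter_upwards [h1, h2] with q e1 e2
    exact ⟨by rw [e1], by rw [e2]⟩
  -- integrability criterion
  have hFIB : ∀ F : ℝ × ℝ → ℝ, AEStronglyMeasurable F (μ.prod μ) →
      (∀ q, ‖F q‖ ≤ ‖f q.1‖ * ‖f q.2‖ * |φ q.1 q.2|) → Integrable F (μ.prod μ) := by
    intro F hFm hFb
    refine hBint.mono' hFm ?_
    filter_upwards [hae] with q hq
    calc ‖F q‖ ≤ ‖f q.1‖ * ‖f q.2‖ * |φ q.1 q.2| := hFb q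
      _ = g q.1 * g q.2 * |φ q.1 q.2| := by rw [hq.1, hq.2]
  have hf1 : AEStronglyMeasurable (fun q : ℝ × ℝ => f q.1) (μ.prod μ) :=
    hfm.comp_quasiMeasurePreserving Measure.quasiMeasurePreserving_fst
  have hf2 : AEStronglyMeasurable (fun q : ℝ × ℝ => f q.2) (μ.prod μ) :=
    hfm.comp_quasiMeasurePreserving Measure.quasiMeasurePreserving_snd
  have hF0m : AEStronglyMeasurable (fun q : ℝ × ℝ => ⟪f q.1, f q.2⟫ * φ q.1 q.2) (μ.prod μ) :=
    (hf1.inner hf2).mul hφm.aestronglyMeasurable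
  have hF0b : ∀ q : ℝ × ℝ, ‖⟪f q.1, f q.2⟫ * φ q.1 q.2‖ ≤ ‖f q.1‖ * ‖f q.2‖ * |φ q.1 q.2| := by
    intro q
    rw [Real.norm_eq_abs, abs_mul]
    exact mul_le_mul_of_nonneg_right (abs_real_inner_le_norm _ _) (abs_nonneg _)
  have hIntF0 : Integrable (fun q : ℝ × ℝ => ⟪f q.1, f q.2⟫ * φ q.1 q.2) (μ.prod μ) :=
    hFIB _ hF0m hF0b
  refine ⟨by rw [IntegrableOn, hprodμ]; exact hIntF0, ?_⟩
  -- positivity via a countable Hilbert basis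
  obtain ⟨w, b, -⟩ := exists_hilbertBasis ℝ H
  haveI : Countable w := by
    refine Pairwise.countable_of_isOpen_disjoint
      (s := fun i : w => Metric.ball (b i : H) (1/2)) ?_ (fun i => Metric.isOpen_ball)
      (fun i => Metric.nonempty_ball.2 (by norm_num))
    intro i j hij
    have h1 : ‖(b i : H)‖ = 1 := b.orthonormal.1 i
    have h2 : ‖(b j : H)‖ = 1 := b.orthonormal.1 j
    have h3 : ⟪(b i : H), b j⟫ = 0 := b.orthonormal.2 hij
    have hsq : ‖(b i : H) - b j‖ ^ 2 = 2 := by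
      rw [norm_sub_sq_real, h1, h2, h3]; ring
    have hdist : (1:ℝ) ≤ dist (b i : H) (b j) := by
      rw [dist_eq_norm]
      nlinarith [norm_nonneg ((b i : H) - b j)]
    simp only [Function.onFun]
    exact Metric.ball_disjoint_ball (by linarith)
  set fc : w → ℝ → ℝ := fun n u => ⟪f u, (b n : H)⟫ with hfcdef
  have hfcb : ∀ (n : w) (u : ℝ), |fc n u| ≤ ‖f u‖ := fun n u => by
    calc |fc n u| ≤ ‖f u‖ * ‖(b n : H)‖ := abs_real_inner_le_norm _ _
      _ = ‖f u‖ := by rw [b.orthonormal.1 n, mul_one]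
  have hfcm : ∀ n, AEStronglyMeasurable (fc n) μ := fun n =>
    hfm.inner aestronglyMeasurable_const
  have hfcLp : ∀ n, MemLp (fc n) (ENNReal.ofReal p) μ := fun n =>
    hf.of_le (hfcm n) (Filter.Eventually.of_forall fun u => by
      rw [Real.norm_eq_abs]; exact hfcb n u)
  set F : w → ℝ × ℝ → ℝ := fun n q => fc n q.1 * fc n q.2 * φ q.1 q.2 with hFdef
  have hFnm : ∀ n, AEStronglyMeasurable (F n) (μ.prod μ) := fun n =>
    ((((hfcm n).comp_quasiMeasurePreserving Measure.quasiMeasurePreserving_fst).mul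
      ((hfcm n).comp_quasiMeasurePreserving Measure.quasiMeasurePreserving_snd)).mul
      hφm.aestronglyMeasurable)
  have hFni : ∀ n, Integrable (F n) (μ.prod μ) := fun n =>
    hFIB (F n) (hFnm n) (fun q => by
      rw [Real.norm_eq_abs, abs_mul, abs_mul]
      exact mul_le_mul_of_nonneg_right
        (mul_le_mul (hfcb n q.1) (hfcb n q.2) (abs_nonneg _) (norm_nonneg _)) (abs_nonneg _))
  have hFn0 : ∀ n, 0 ≤ ∫ q, F n q ∂(μ.prod μ) := fun n => by
    rw [MeasureTheory.integral_prod _ (hFni n)]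
    exact hpos (fc n) (hfcLp n)
  have hsum : ∀ q : ℝ × ℝ, HasSum (fun n => F n q) (⟪f q.1, f q.2⟫ * φ q.1 q.2) := by
    intro q
    have h := (b.hasSum_inner_mul_inner (f q.1) (f q.2)).mul_right (φ q.1 q.2)
    have heq : (fun n : w => F n q)
        = fun n : w => ⟪f q.1, (b n : H)⟫ * ⟪(b n : H), f q.2⟫ * φ q.1 q.2 := by
      funext n
      simp only [hFdef, hfcdef]
      rw [real_inner_comm (f q.2)]
    rw [heq]
    exact h
  -- Cauchy–Schwarz + Bessel bound for partial sums
  have hCS : ∀ (s : Finset w) (q : ℝ × ℝ),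
      ‖∑ n ∈ s, F n q‖ ≤ ‖f q.1‖ * ‖f q.2‖ * |φ q.1 q.2| := by
    intro s q
    have h1 : (∑ n ∈ s, F n q) = (∑ n ∈ s, fc n q.1 * fc n q.2) * φ q.1 q.2 := by
      rw [Finset.sum_mul]
    have hcs : (∑ n ∈ s, fc n q.1 * fc n q.2) ^ 2
        ≤ (∑ n ∈ s, fc n q.1 ^ 2) * (∑ n ∈ s, fc n q.2 ^ 2) :=
      Finset.sum_mul_sq_le_sq_mul_sq s _ _
    have hb1 : (∑ n ∈ s, fc n q.1 ^ 2) ≤ ‖f q.1‖ ^ 2 := by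
      have h := b.orthonormal.sum_inner_products_le (f q.1) (s := s)
      simpa only [Real.norm_eq_abs, sq_abs, real_inner_comm] using h
    have hb2 : (∑ n ∈ s, fc n q.2 ^ 2) ≤ ‖f q.2‖ ^ 2 := by
      have h := b.orthonormal.sum_inner_products_le (f q.2) (s := s)
      simpa only [Real.norm_eq_abs, sq_abs, real_inner_comm] using h
    have hnn1 : (0:ℝ) ≤ ∑ n ∈ s, fc n q.1 ^ 2 := Finset.sum_nonneg fun n _ => sq_nonneg _
    have hnn2 : (0:ℝ) ≤ ∑ n ∈ s, fc n q.2 ^ 2 := Finset.sum_nonneg fun n _ => sq_nonneg _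
    have habs : |∑ n ∈ s, fc n q.1 * fc n q.2| ≤ ‖f q.1‖ * ‖f q.2‖ := by
      nlinarith [sq_abs (∑ n ∈ s, fc n q.1 * fc n q.2),
        abs_nonneg (∑ n ∈ s, fc n q.1 * fc n q.2),
        mul_nonneg (norm_nonneg (f q.1)) (norm_nonneg (f q.2)),
        norm_nonneg (f q.1), norm_nonneg (f q.2)]
    calc ‖∑ n ∈ s, F n q‖ = |∑ n ∈ s, fc n q.1 * fc n q.2| * |φ q.1 q.2| := by
          rw [h1, Real.norm_eq_abs, abs_mul]
      _ ≤ ‖f q.1‖ * ‖f q.2‖ * |φ q.1 q.2| :=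
          mul_le_mul_of_nonneg_right habs (abs_nonneg _)
    -- done
  have hBint' : Integrable (fun q : ℝ × ℝ => ‖f q.1‖ * ‖f q.2‖ * |φ q.1 q.2|) (μ.prod μ) :=
    hFIB _ ((hf1.norm.mul hf2.norm).mul hφm.abs.aestronglyMeasurable)
      (fun q => by
        rw [Real.norm_eq_abs, abs_of_nonneg
          (mul_nonneg (mul_nonneg (norm_nonneg _) (norm_nonneg _)) (abs_nonneg _))])
  have htends : Filter.Tendsto (fun s : Finset w => ∫ q, (∑ n ∈ s, F n q) ∂(μ.prod μ))
      Filter.atTop (nhds (∫ q, ⟪f q.1, f q.2⟫ * φ q.1 q.2 ∂(μ.prod μ))) := by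
    refine tendsto_integral_filter_of_dominated_convergence
      (fun q => ‖f q.1‖ * ‖f q.2‖ * |φ q.1 q.2|) ?_ ?_ hBint' ?_
    · exact Filter.Eventually.of_forall fun s =>
        Finset.aestronglyMeasurable_fun_sum s fun n _ => hFnm n
    · exact Filter.Eventually.of_forall fun s =>
        Filter.Eventually.of_forall fun q => hCS s q
    · exact Filter.Eventually.of_forall fun q => hsum q
  have h0 : 0 ≤ ∫ q, ⟪f q.1, f q.2⟫ * φ q.1 q.2 ∂(μ.prod μ) := by
    refine ge_of_tendsto' htends fun s => ?_
    rw [integral_finset_sum s fun n _ => hFni n]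
    exact Finset.sum_nonneg fun n _ => hFn0 n
  rw [MeasureTheory.integral_prod _ hIntF0] at h0
  exact h0
end

section
/- Let T > 0 and let φ : [0,T]² → ℝ be a measurable symmetric kernel satisfying condition (C_R) with exponent p ∈ (1,∞) and constant C > 0. Let (H,⟨·,·⟩_H) be a separable real Hilbert space, ε > 0 and f ∈ L^{p+ε}([0,T];H). Then for all 0 ≤ s ≤ t ≤ T: ∫_s^t ∫_s^t |⟨f(u), f(v)⟩_H φ(u,v)| du dv ≤ C (t−s)^{2ε/(p(p+ε))} ‖f‖_{L^{p+ε}([0,T];H)}^2. -/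
open MeasureTheory Set
open scoped RealInnerProductSpace

theorem stmt_10_alg (p ε C J KT d : ℝ) (hp0 : 0 < p) (hε : 0 < ε) (hC : 0 < C)
    (hJ0 : 0 ≤ J) (hKT0 : 0 ≤ KT) (hd : 0 < d)
    (hJle : J ≤ KT ^ (p / (p + ε)) * d ^ (ε / (p + ε))) :
    C * (J ^ (1 / p)) ^ 2 ≤ C * d ^ (2 * ε / (p * (p + ε))) * (KT ^ (1 / (p + ε))) ^ 2 := by
  have hpε : (0:ℝ) < p + ε := by linarith
  have hbound : J ^ (1 / p) ≤ KT ^ (1 / (p + ε)) * d ^ (ε / (p * (p + ε))) := by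
    have h1 : J ^ (1 / p) ≤ (KT ^ (p / (p + ε)) * d ^ (ε / (p + ε))) ^ (1 / p) :=
      Real.rpow_le_rpow hJ0 hJle (by positivity)
    refine le_trans h1 ?_
    rw [Real.mul_rpow (Real.rpow_nonneg hKT0 _) (Real.rpow_nonneg hd.le _),
      ← Real.rpow_mul hKT0, ← Real.rpow_mul hd.le]
    have e1 : p / (p + ε) * (1 / p) = 1 / (p + ε) := by
      rw [div_mul_div_comm, mul_one, mul_comm (p + ε) p,
        div_eq_div_iff (by positivity) (by positivity)]
      ring
    have e2 : ε / (p + ε) * (1 / p) = ε / (p * (p + ε)) := by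
      rw [div_mul_div_comm, mul_one, mul_comm (p + ε) p]
    rw [e1, e2]
  have hsq : (d ^ (ε / (p * (p + ε)))) ^ 2 = d ^ (2 * ε / (p * (p + ε))) := by
    rw [← Real.rpow_natCast (d ^ (ε / (p * (p + ε)))) 2, ← Real.rpow_mul hd.le]
    congr 1
    push_cast
    ring
  calc C * (J ^ (1 / p)) ^ 2
      ≤ C * (KT ^ (1 / (p + ε)) * d ^ (ε / (p * (p + ε)))) ^ 2 := by
        refine mul_le_mul_of_nonneg_left ?_ hC.le
        exact pow_le_pow_left₀ (Real.rpow_nonneg hJ0 _) hbound 2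
    _ = C * d ^ (2 * ε / (p * (p + ε))) * (KT ^ (1 / (p + ε))) ^ 2 := by
        rw [mul_pow, hsq]; ring

theorem stmt_10_aux
    {H : Type*} [NormedAddCommGroup H] [InnerProductSpace ℝ H]
    (T : ℝ) (φ : ℝ → ℝ → ℝ) (hφmeas : Measurable (Function.uncurry φ))
    (p : ℝ) (hp : 1 < p) (C : ℝ) (hC : 0 < C)
    (hCR : ∀ f : ℝ → ℝ, MemLp f (ENNReal.ofReal p) (volume.restrict (Set.Icc 0 T)) →
      ∫⁻ u in Set.Icc (0 : ℝ) T, ∫⁻ v in Set.Icc (0 : ℝ) T,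
          ENNReal.ofReal |f u * f v * φ u v|
        ≤ ENNReal.ofReal
            (C * ((∫ u in Set.Icc (0 : ℝ) T, |f u| ^ p) ^ (1 / p)) ^ 2))
    (ε : ℝ) (hε : 0 < ε) (f : ℝ → H) (hfm : StronglyMeasurable f)
    (hf : MemLp f (ENNReal.ofReal (p + ε)) (volume.restrict (Set.Icc 0 T)))
    (s t : ℝ) (hs : 0 ≤ s) (hst : s < t) (ht : t ≤ T) :
    ∫⁻ u in Set.Icc s t, ∫⁻ v in Set.Icc s t, ENNReal.ofReal |⟪f u, f v⟫ * φ u v|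
      ≤ ENNReal.ofReal
          (C * (t - s) ^ (2 * ε / (p * (p + ε))) *
            ((∫ u in Set.Icc (0 : ℝ) T, ‖f u‖ ^ (p + ε)) ^ (1 / (p + ε))) ^ 2) := by
  have hp0 : (0:ℝ) < p := lt_trans one_pos hp
  have hpε : (0:ℝ) < p + ε := by linarith
  have hts : (0:ℝ) < t - s := sub_pos.mpr hst
  have hSsub : Icc s t ⊆ Icc (0:ℝ) T := Icc_subset_Icc hs ht
  haveI : IsFiniteMeasure (volume.restrict (Icc (0:ℝ) T)) :=
    ⟨by simp [Measure.restrict_apply, Real.volume_Icc]⟩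
  haveI : IsFiniteMeasure (volume.restrict (Icc s t)) :=
    ⟨by simp [Measure.restrict_apply, Real.volume_Icc]⟩
  set g : ℝ → ℝ := (Icc s t).indicator (fun u => ‖f u‖) with hg_def
  have hgmeas : Measurable g :=
    (hfm.norm.measurable).indicator measurableSet_Icc
  have hgℒ : MemLp g (ENNReal.ofReal p) (volume.restrict (Icc (0:ℝ) T)) := by
    have h0 : MemLp g (ENNReal.ofReal (p + ε)) (volume.restrict (Icc (0:ℝ) T)) :=
      (hf.norm).indicator measurableSet_Icc
    exact h0.mono_exponent (ENNReal.ofReal_le_ofReal (by linarith))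
  have hFmeas : Measurable fun q : ℝ × ℝ => ENNReal.ofReal |g q.1 * g q.2 * φ q.1 q.2| :=
    ENNReal.measurable_ofReal.comp
      ((((hgmeas.comp measurable_fst).mul (hgmeas.comp measurable_snd)).mul hφmeas).abs)
  have hJ0 : (0:ℝ) ≤ ∫ u in Icc s t, ‖f u‖ ^ p :=
    integral_nonneg fun u => Real.rpow_nonneg (norm_nonneg _) _
  have hKT0 : (0:ℝ) ≤ ∫ u in Icc (0:ℝ) T, ‖f u‖ ^ (p + ε) :=
    integral_nonneg fun u => Real.rpow_nonneg (norm_nonneg _) _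
  have hI : ∫ u in Icc (0:ℝ) T, |g u| ^ p = ∫ u in Icc s t, ‖f u‖ ^ p := by
    have hgi : ∀ u, |g u| ^ p = (Icc s t).indicator (fun u => ‖f u‖ ^ p) u := by
      intro u
      by_cases hu : u ∈ Icc s t
      · simp [hg_def, indicator_of_mem hu, abs_of_nonneg (norm_nonneg _)]
      · simp [hg_def, indicator_of_notMem hu, Real.zero_rpow (ne_of_gt hp0)]
    simp_rw [hgi]
    rw [setIntegral_indicator measurableSet_Icc, inter_eq_self_of_subset_right hSsub]
  have hconj : Real.HolderConjugate ((p + ε) / p) ((p + ε) / ε) := by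
    rw [Real.holderConjugate_iff]
    constructor
    · rw [one_lt_div hp0]; linarith
    · rw [inv_div, inv_div, ← add_div]
      exact div_self (ne_of_gt hpε)
  have hfS : MemLp f (ENNReal.ofReal (p + ε)) (volume.restrict (Icc s t)) := by
    have h := hf.restrict (Icc s t)
    rwa [Measure.restrict_restrict measurableSet_Icc, inter_eq_left.mpr hSsub] at h
  have hfp : MemLp (fun u => ‖f u‖ ^ p) (ENNReal.ofReal ((p + ε) / p))
      (volume.restrict (Icc s t)) := by
    have h1 := hfS.norm_rpow_div (ENNReal.ofReal p)
    rwa [ENNReal.toReal_ofReal hp0.le, ← ENNReal.ofReal_div_of_pos hp0] at h1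
  have holder : ∫ u in Icc s t, ‖f u‖ ^ p
      ≤ (∫ u in Icc s t, ‖f u‖ ^ (p + ε)) ^ (p / (p + ε)) * (t - s) ^ (ε / (p + ε)) := by
    have h := integral_mul_le_Lp_mul_Lq_of_nonneg hconj
      (f := fun u => ‖f u‖ ^ p) (g := fun _ => (1:ℝ))
      (Filter.Eventually.of_forall fun u => Real.rpow_nonneg (norm_nonneg _) _)
      (Filter.Eventually.of_forall fun _ => zero_le_one)
      hfp (memLp_const 1)
    simp only [mul_one, Real.one_rpow] at h
    have e1 : ∀ u : ℝ, (‖f u‖ ^ p) ^ ((p + ε) / p) = ‖f u‖ ^ (p + ε) := by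
      intro u
      rw [← Real.rpow_mul (norm_nonneg _), mul_div_cancel₀ _ (ne_of_gt hp0)]
    simp_rw [e1] at h
    rw [integral_const, measureReal_def, Measure.restrict_apply MeasurableSet.univ, univ_inter,
      Real.volume_Icc, ENNReal.toReal_ofReal hts.le, smul_eq_mul, mul_one] at h
    rw [one_div_div, one_div_div] at h
    exact h
  have hint : IntegrableOn (fun u => ‖f u‖ ^ (p + ε)) (Icc (0:ℝ) T) := by
    have h := hf.integrable_norm_rpow
      (by simp only [ne_eq, ENNReal.ofReal_eq_zero, not_le]; linarith)
      (by simp)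
    simpa [ENNReal.toReal_ofReal hpε.le, IntegrableOn] using h
  have hKle : ∫ u in Icc s t, ‖f u‖ ^ (p + ε) ≤ ∫ u in Icc (0:ℝ) T, ‖f u‖ ^ (p + ε) :=
    setIntegral_mono_set hint
      (Filter.Eventually.of_forall fun u => Real.rpow_nonneg (norm_nonneg _) _)
      (HasSubset.Subset.eventuallyLE hSsub)
  calc ∫⁻ u in Icc s t, ∫⁻ v in Icc s t, ENNReal.ofReal |⟪f u, f v⟫ * φ u v|
      ≤ ∫⁻ u in Icc s t, ∫⁻ v in Icc s t, ENNReal.ofReal |g u * g v * φ u v| := by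
        refine setLIntegral_mono (hFmeas.lintegral_prod_right') fun u hu => ?_
        refine setLIntegral_mono (hFmeas.comp measurable_prodMk_left) fun v hv => ?_
        refine ENNReal.ofReal_le_ofReal ?_
        have hgu : g u = ‖f u‖ := indicator_of_mem hu _
        have hgv : g v = ‖f v‖ := indicator_of_mem hv _
        rw [abs_mul, abs_mul, abs_mul, hgu, hgv, abs_of_nonneg (norm_nonneg _),
          abs_of_nonneg (norm_nonneg _)]
        exact mul_le_mul_of_nonneg_right (abs_real_inner_le_norm _ _) (abs_nonneg _)
    _ ≤ ∫⁻ u in Icc (0:ℝ) T, ∫⁻ v in Icc (0:ℝ) T, ENNReal.ofReal |g u * g v * φ u v| := by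
        refine le_trans (lintegral_mono fun u => lintegral_mono_set hSsub) ?_
        exact lintegral_mono_set hSsub
    _ ≤ ENNReal.ofReal (C * ((∫ u in Icc (0:ℝ) T, |g u| ^ p) ^ (1 / p)) ^ 2) := hCR g hgℒ
    _ ≤ ENNReal.ofReal
          (C * (t - s) ^ (2 * ε / (p * (p + ε))) *
            ((∫ u in Icc (0:ℝ) T, ‖f u‖ ^ (p + ε)) ^ (1 / (p + ε))) ^ 2) := by
        refine ENNReal.ofReal_le_ofReal ?_
        rw [hI]
        refine stmt_10_alg p ε C _ _ _ hp0 hε hC hJ0 hKT0 hts (le_trans holder ?_)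
        refine mul_le_mul_of_nonneg_right ?_ (Real.rpow_nonneg hts.le _)
        exact Real.rpow_le_rpow
          (integral_nonneg fun u => Real.rpow_nonneg (norm_nonneg _) _) hKle
          (by positivity)

/-- If the measurable symmetric kernel `φ` satisfies `(C_R)` with
exponent `p ∈ (1,∞)` and constant `C > 0`, `H` is a separable real Hilbert space,
`ε > 0` and `f ∈ L^{p+ε}([0,T];H)`, then for all `0 ≤ s ≤ t ≤ T`:
`∫_s^t ∫_s^t |⟨f(u),f(v)⟩_H φ(u,v)| du dv
  ≤ C (t-s)^{2ε/(p(p+ε))} ‖f‖_{L^{p+ε}([0,T];H)}²`. -/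
theorem stmt_10
    {H : Type*} [NormedAddCommGroup H] [InnerProductSpace ℝ H] [CompleteSpace H]
    [SecondCountableTopology H]
    (T : ℝ) (hT : 0 < T) (φ : ℝ → ℝ → ℝ) (hφmeas : Measurable (Function.uncurry φ))
    (hφsymm : ∀ u v, φ u v = φ v u)
    (p : ℝ) (hp : 1 < p) (C : ℝ) (hC : 0 < C)
    (hCR : ∀ f : ℝ → ℝ, MemLp f (ENNReal.ofReal p) (volume.restrict (Set.Icc 0 T)) →
      ∫⁻ u in Set.Icc (0 : ℝ) T, ∫⁻ v in Set.Icc (0 : ℝ) T,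
          ENNReal.ofReal |f u * f v * φ u v|
        ≤ ENNReal.ofReal
            (C * ((∫ u in Set.Icc (0 : ℝ) T, |f u| ^ p) ^ (1 / p)) ^ 2))
    (ε : ℝ) (hε : 0 < ε) (f : ℝ → H)
    (hf : MemLp f (ENNReal.ofReal (p + ε)) (volume.restrict (Set.Icc 0 T)))
    (s t : ℝ) (hs : 0 ≤ s) (hst : s ≤ t) (ht : t ≤ T) :
    ∫⁻ u in Set.Icc s t, ∫⁻ v in Set.Icc s t, ENNReal.ofReal |⟪f u, f v⟫ * φ u v|
      ≤ ENNReal.ofReal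
          (C * (t - s) ^ (2 * ε / (p * (p + ε))) *
            ((∫ u in Set.Icc (0 : ℝ) T, ‖f u‖ ^ (p + ε)) ^ (1 / (p + ε))) ^ 2) := by
  rcases eq_or_lt_of_le hst with rfl | hst'
  · have h0 : volume.restrict (Icc s s) = 0 := by
      rw [Measure.restrict_eq_zero, Icc_self]
      exact measure_singleton s
    rw [h0]
    simp
  · -- replace `f` by a strongly measurable representative
    set f' := hf.1.mk f with hf'_def
    have hf'm : StronglyMeasurable f' := hf.1.stronglyMeasurable_mk
    have hff' : f =ᵐ[volume.restrict (Icc (0:ℝ) T)] f' := hf.1.ae_eq_mk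
    have hSsub : Icc s t ⊆ Icc (0:ℝ) T := Icc_subset_Icc hs ht
    have hf2 : MemLp f' (ENNReal.ofReal (p + ε)) (volume.restrict (Set.Icc 0 T)) :=
      hf.ae_eq hff'
    have haeS : f =ᵐ[volume.restrict (Icc s t)] f' :=
      ae_restrict_of_ae_restrict_of_subset hSsub hff'
    have hRHS : ∫ u in Icc (0:ℝ) T, ‖f u‖ ^ (p + ε) = ∫ u in Icc (0:ℝ) T, ‖f' u‖ ^ (p + ε) :=
      integral_congr_ae (hff'.mono fun x hx => by simp only [hx])
    have hLHS : ∫⁻ u in Icc s t, ∫⁻ v in Icc s t, ENNReal.ofReal |⟪f u, f v⟫ * φ u v|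
        = ∫⁻ u in Icc s t, ∫⁻ v in Icc s t, ENNReal.ofReal |⟪f' u, f' v⟫ * φ u v| := by
      refine lintegral_congr_ae ?_
      filter_upwards [haeS] with u hu
      refine lintegral_congr_ae ?_
      filter_upwards [haeS] with v hv
      rw [hu, hv]
    rw [hLHS, hRHS]
    exact stmt_10_aux T φ hφmeas p hp C hC hCR ε hε f' hf'm hf2 s t hs hst' ht
end

section
/- Let T > 0, let φ : [0,T]² → ℝ be a measurable symmetric kernel satisfying condition (C_R) with exponent p ∈ (1,∞) and constant C > 0, let (U,⟨·,·⟩_U) and (H,⟨·,·⟩_H) be separable real Hilbert spaces, (e_n) an orthonormal basis of U, and (λ_n) nonnegative reals with ∑_n √λ_n < ∞. For each n let I_n : L^p([0,T];H) → L²(Ω;H) be a linear map satisfying, for all f, h ∈ L^p([0,T];H) and all x, y ∈ H: E[⟨I_n f, x⟩_H ⟨I_m h, y⟩_H] = δ_{nm} ∫_0^T ∫_0^T ⟨f(s), x⟩_H ⟨h(s'), y⟩_H φ(s,s') ds ds' and E⟨I_n f, I_n h⟩_H = ∫_0^T ∫_0^T ⟨f(s), h(s')⟩_H φ(s,s') ds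 ds'. Then for every h_1, h_2 ∈ L^p([0,T];L(U,H)) the series J(h_i) := ∑_n √λ_n I_n(h_i(·)e_n) converges in L²(Ω;H), and for all x, y ∈ H: E[⟨J(h_1), x⟩_H ⟨J(h_2), y⟩_H] = ∫_0^T ∫_0^T ⟨h_2(s') Q h_1(s)^* x, y⟩_H φ(s,s') ds ds', where Q z := ∑_n λ_n ⟨z, e_n⟩_U e_n. -/
open MeasureTheory Set
open scoped RealInnerProductSpace ENNReal

set_option maxHeartbeats 1600000

theorem stmt_15_aux
    {U : Type*} [NormedAddCommGroup U] [InnerProductSpace ℝ U] [CompleteSpace U]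
    [SecondCountableTopology U]
    {H : Type*} [NormedAddCommGroup H] [InnerProductSpace ℝ H] [CompleteSpace H]
    [SecondCountableTopology H]
    {Ω : Type*} [MeasurableSpace Ω] (P : Measure Ω) [IsProbabilityMeasure P]
    (μ : Measure ℝ) [IsFiniteMeasure μ]
    (φ : ℝ → ℝ → ℝ) (hφmeas : Measurable (Function.uncurry φ))
    (q : ℝ≥0∞) [Fact (1 ≤ q)]
    (e : HilbertBasis ℕ ℝ U)
    (l : ℕ → ℝ) (hl : ∀ n, 0 ≤ l n) (hsum : Summable (fun n => Real.sqrt (l n)))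
    (Q : U →L[ℝ] U) (hQ : ∀ z : U, HasSum (fun n => (l n * ⟪z, e n⟫) • (e n : U)) (Q z))
    (I : ℕ → (Lp H q μ →ₗ[ℝ] Lp H 2 P))
    (hI1 : ∀ (n m : ℕ) (f h : Lp H q μ) (x y : H),
      ∫ ω, ⟪(I n f) ω, x⟫ * ⟪(I m h) ω, y⟫ ∂P
        = (if n = m then (1 : ℝ) else 0) *
            ∫ u, ∫ v, ⟪f u, x⟫ * ⟪h v, y⟫ * φ u v ∂μ ∂μ)
    (hI2 : ∀ (n : ℕ) (f h : Lp H q μ),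
      ∫ ω, ⟪(I n f) ω, (I n h) ω⟫ ∂P = ∫ u, ∫ v, ⟪f u, h v⟫ * φ u v ∂μ ∂μ)
    (h₁ h₂ : ℝ → (U →L[ℝ] H))
    (hh₁m : AEStronglyMeasurable h₁ μ) (hh₂m : AEStronglyMeasurable h₂ μ)
    (b : ℝ → ℝ) (hbmeas : Measurable b) (hbnn : ∀ u, 0 ≤ b u)
    (hb1 : ∀ᵐ u ∂μ, ‖h₁ u‖ ≤ b u ∧ ‖h₂ u‖ ≤ b u)
    (K : ℝ) (hK0 : 0 ≤ K)
    (hKbound : ∫⁻ u, ∫⁻ v, ENNReal.ofReal |b u * b v * φ u v| ∂μ ∂μ ≤ ENNReal.ofReal K)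
    (F₁ F₂ : ℕ → Lp H q μ)
    (hF₁ : ∀ n, (F₁ n : ℝ → H) =ᵐ[μ] fun s => h₁ s (e n))
    (hF₂ : ∀ n, (F₂ n : ℝ → H) =ᵐ[μ] fun s => h₂ s (e n)) :
    ∃ J₁ J₂ : Lp H 2 P,
      HasSum (fun n => Real.sqrt (l n) • I n (F₁ n)) J₁ ∧
      HasSum (fun n => Real.sqrt (l n) • I n (F₂ n)) J₂ ∧
      ∀ x y : H,
        ∫ ω, ⟪J₁ ω, x⟫ * ⟪J₂ ω, y⟫ ∂P
          = ∫ u, ∫ v,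
              ⟪h₂ v (Q (ContinuousLinearMap.adjoint (h₁ u) x)), y⟫ * φ u v ∂μ ∂μ := by
  classical
  have habs : ∀ u v, |b u * b v * φ u v| = b u * (b v * |φ u v|) := by
    intro u v
    rw [abs_mul, abs_mul, abs_of_nonneg (hbnn u), abs_of_nonneg (hbnn v), mul_assoc]
  -- the inner kernel integral
  set Φ : ℝ → ℝ≥0∞ := fun u => ∫⁻ v, ENNReal.ofReal (b v * |φ u v|) ∂μ with hΦdef
  have hΦmeas : Measurable Φ := by
    have : Measurable (fun z : ℝ × ℝ => ENNReal.ofReal (b z.2 * |φ z.1 z.2|)) := by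
      apply ENNReal.measurable_ofReal.comp
      exact (hbmeas.comp measurable_snd).mul hφmeas.abs
    exact this.lintegral_prod_right'
  have hsplit : ∀ u, ∫⁻ v, ENNReal.ofReal |b u * b v * φ u v| ∂μ
      = ENNReal.ofReal (b u) * Φ u := by
    intro u
    rw [hΦdef, ← lintegral_const_mul' _ _ ENNReal.ofReal_ne_top]
    refine lintegral_congr fun v => ?_
    rw [habs u v, ENNReal.ofReal_mul (hbnn u)]
  have hLfin : ∫⁻ u, ENNReal.ofReal (b u) * Φ u ∂μ ≤ ENNReal.ofReal K := by
    calc ∫⁻ u, ENNReal.ofReal (b u) * Φ u ∂μ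
        = ∫⁻ u, ∫⁻ v, ENNReal.ofReal |b u * b v * φ u v| ∂μ ∂μ :=
          (lintegral_congr fun u => (hsplit u)).symm
      _ ≤ ENNReal.ofReal K := hKbound
  have hae1 : ∀ᵐ u ∂μ, ENNReal.ofReal (b u) * Φ u < ∞ :=
    ae_lt_top ((ENNReal.measurable_ofReal.comp hbmeas).mul hΦmeas)
      (lt_of_le_of_lt hLfin ENNReal.ofReal_lt_top).ne
  -- key integral bound for double integrals dominated by the kernel
  have hbd : ∀ (G : ℝ → ℝ → ℝ) (c : ℝ), 0 ≤ c →
      (∀ᵐ u ∂μ, ∀ᵐ v ∂μ, |G u v| ≤ c * (b u * (b v * |φ u v|))) →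
      |∫ u, ∫ v, G u v ∂μ ∂μ| ≤ c * K := by
    intro G c hc hG
    have step1 : ∀ u : ℝ, ENNReal.ofReal |∫ v, G u v ∂μ| ≤ ∫⁻ v, ENNReal.ofReal |G u v| ∂μ := by
      intro u
      calc ENNReal.ofReal |∫ v, G u v ∂μ|
          ≤ ENNReal.ofReal ((∫⁻ v, ENNReal.ofReal ‖G u v‖ ∂μ).toReal) := by
            apply ENNReal.ofReal_le_ofReal
            simpa [Real.norm_eq_abs] using
              norm_integral_le_lintegral_norm (μ := μ) (fun v => G u v)
        _ ≤ ∫⁻ v, ENNReal.ofReal |G u v| ∂μ := by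
            refine le_trans ENNReal.ofReal_toReal_le ?_
            simp [Real.norm_eq_abs]
    have step2 : ∫⁻ u, ∫⁻ v, ENNReal.ofReal |G u v| ∂μ ∂μ
        ≤ ENNReal.ofReal c * ENNReal.ofReal K := by
      calc ∫⁻ u, ∫⁻ v, ENNReal.ofReal |G u v| ∂μ ∂μ
          ≤ ∫⁻ u, ENNReal.ofReal c * ∫⁻ v, ENNReal.ofReal |b u * b v * φ u v| ∂μ ∂μ := by
            refine lintegral_mono_ae ?_
            filter_upwards [hG] with u hu
            rw [← lintegral_const_mul' _ _ ENNReal.ofReal_ne_top]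
            refine lintegral_mono_ae ?_
            filter_upwards [hu] with v hv
            calc ENNReal.ofReal |G u v| ≤ ENNReal.ofReal (c * (b u * (b v * |φ u v|))) :=
                  ENNReal.ofReal_le_ofReal hv
              _ = ENNReal.ofReal c * ENNReal.ofReal |b u * b v * φ u v| := by
                  rw [ENNReal.ofReal_mul hc, habs]
        _ = ENNReal.ofReal c * ∫⁻ u, ∫⁻ v, ENNReal.ofReal |b u * b v * φ u v| ∂μ ∂μ :=
            lintegral_const_mul' _ _ ENNReal.ofReal_ne_top
        _ ≤ ENNReal.ofReal c * ENNReal.ofReal K := mul_le_mul_right hKbound _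
    calc |∫ u, ∫ v, G u v ∂μ ∂μ|
        ≤ (∫⁻ u, ENNReal.ofReal |∫ v, G u v ∂μ| ∂μ).toReal := by
          simpa [Real.norm_eq_abs] using
            norm_integral_le_lintegral_norm (μ := μ) (fun u => ∫ v, G u v ∂μ)
      _ ≤ (ENNReal.ofReal c * ENNReal.ofReal K).toReal := by
          refine ENNReal.toReal_mono
            (ENNReal.mul_ne_top ENNReal.ofReal_ne_top ENNReal.ofReal_ne_top) ?_
          exact le_trans (lintegral_mono step1) step2
      _ = c * K := by
          rw [← ENNReal.ofReal_mul hc, ENNReal.toReal_ofReal (mul_nonneg hc hK0)]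
  -- the component integrals are uniformly bounded
  have hIbound : ∀ (n : ℕ) (f : Lp H q μ), (∀ᵐ u ∂μ, ‖f u‖ ≤ b u) →
      ‖I n f‖ ≤ Real.sqrt K := by
    intro n f hf
    have h1 : ‖I n f‖ ^ 2 = ∫ ω, ⟪(I n f) ω, (I n f) ω⟫ ∂P := by
      rw [← real_inner_self_eq_norm_sq]
      exact MeasureTheory.L2.inner_def (I n f) (I n f)
    have h3 : |∫ u, ∫ v, ⟪f u, f v⟫ * φ u v ∂μ ∂μ| ≤ 1 * K := by
      refine hbd _ 1 (by norm_num) ?_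
      filter_upwards [hf] with u hu
      filter_upwards [hf] with v hv
      rw [one_mul, abs_mul]
      calc |⟪(f : ℝ → H) u, (f : ℝ → H) v⟫| * |φ u v| ≤ (b u * b v) * |φ u v| := by
            apply mul_le_mul_of_nonneg_right _ (abs_nonneg _)
            exact le_trans (abs_real_inner_le_norm _ _)
              (mul_le_mul hu hv (norm_nonneg _) (le_trans (norm_nonneg _) hu))
        _ = b u * (b v * |φ u v|) := mul_assoc _ _ _
    have h4 : ‖I n f‖ ^ 2 ≤ K := by
      rw [h1, hI2 n f f]
      rw [one_mul] at h3
      exact le_trans (le_abs_self _) h3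
    calc ‖I n f‖ = Real.sqrt (‖I n f‖ ^ 2) := (Real.sqrt_sq (norm_nonneg _)).symm
      _ ≤ Real.sqrt K := Real.sqrt_le_sqrt h4
  have hFb₁ : ∀ n, ∀ᵐ u ∂μ, ‖(F₁ n : ℝ → H) u‖ ≤ b u := by
    intro n
    filter_upwards [hF₁ n, hb1] with u hu hb
    rw [hu]
    calc ‖h₁ u (e n)‖ ≤ ‖h₁ u‖ * ‖(e n : U)‖ := (h₁ u).le_opNorm _
      _ = ‖h₁ u‖ := by rw [e.orthonormal.1 n, mul_one]
      _ ≤ b u := hb.1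
  have hFb₂ : ∀ n, ∀ᵐ u ∂μ, ‖(F₂ n : ℝ → H) u‖ ≤ b u := by
    intro n
    filter_upwards [hF₂ n, hb1] with u hu hb
    rw [hu]
    calc ‖h₂ u (e n)‖ ≤ ‖h₂ u‖ * ‖(e n : U)‖ := (h₂ u).le_opNorm _
      _ = ‖h₂ u‖ := by rw [e.orthonormal.1 n, mul_one]
      _ ≤ b u := hb.2
  -- summability
  have hsummable : ∀ (F : ℕ → Lp H q μ), (∀ n, ∀ᵐ u ∂μ, ‖(F n : ℝ → H) u‖ ≤ b u) →
      Summable (fun n => Real.sqrt (l n) • I n (F n)) := by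
    intro F hF
    apply Summable.of_norm
    refine Summable.of_nonneg_of_le (fun n => norm_nonneg _) (fun n => ?_)
      (hsum.mul_right (Real.sqrt K))
    rw [norm_smul, Real.norm_eq_abs, abs_of_nonneg (Real.sqrt_nonneg _)]
    exact mul_le_mul_of_nonneg_left (hIbound n _ (hF n)) (Real.sqrt_nonneg _)
  have hS₁ : Summable (fun n => Real.sqrt (l n) • I n (F₁ n)) := hsummable F₁ hFb₁
  have hS₂ : Summable (fun n => Real.sqrt (l n) • I n (F₂ n)) := hsummable F₂ hFb₂
  refine ⟨∑' n, Real.sqrt (l n) • I n (F₁ n), ∑' n, Real.sqrt (l n) • I n (F₂ n),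
    hS₁.hasSum, hS₂.hasSum, ?_⟩
  intro x y
  set J₁ : Lp H 2 P := ∑' n, Real.sqrt (l n) • I n (F₁ n) with hJ₁def
  set J₂ : Lp H 2 P := ∑' n, Real.sqrt (l n) • I n (F₂ n) with hJ₂def
  have hJ₁ : HasSum (fun n => Real.sqrt (l n) • I n (F₁ n)) J₁ := hS₁.hasSum
  have hJ₂ : HasSum (fun n => Real.sqrt (l n) • I n (F₂ n)) J₂ := hS₂.hasSum
  -- the covariance bilinear form
  set Axc : Lp H 2 P →L[ℝ] Lp ℝ 2 P := (innerSL ℝ x).compLpL 2 P with hAxdef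
  set Ayc : Lp H 2 P →L[ℝ] Lp ℝ 2 P := (innerSL ℝ y).compLpL 2 P with hAydef
  have hcov : ∀ f g : Lp H 2 P,
      ∫ ω, ⟪f ω, x⟫ * ⟪g ω, y⟫ ∂P = ⟪Axc f, Ayc g⟫ := by
    intro f g
    simp only [hAxdef, hAydef]
    rw [MeasureTheory.L2.inner_def]
    refine integral_congr_ae ?_
    filter_upwards [ContinuousLinearMap.coeFn_compLpL (innerSL ℝ x) f,
      ContinuousLinearMap.coeFn_compLpL (innerSL ℝ y) g] with ω hω1 hω2
    rw [hω1, hω2]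
    simp only [innerSL_apply_apply, RCLike.inner_apply, conj_trivial]
    rw [real_inner_comm (f ω) x, real_inner_comm (g ω) y, mul_comm]
  set E : ℕ → ℝ := fun n => ∫ u, ∫ v, ⟪(F₁ n : ℝ → H) u, x⟫ * ⟪(F₂ n : ℝ → H) v, y⟫ * φ u v ∂μ ∂μ
    with hEdef
  have hterm : ∀ n m : ℕ,
      ⟪Axc (Real.sqrt (l n) • I n (F₁ n)), Ayc (Real.sqrt (l m) • I m (F₂ m))⟫
        = if m = n then l n * E n else 0 := by
    intro n m
    have hc1 : ⟪Axc (Real.sqrt (l n) • I n (F₁ n)), Ayc (Real.sqrt (l m) • I m (F₂ m))⟫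
        = Real.sqrt (l n) * (Real.sqrt (l m) * ⟪Axc (I n (F₁ n)), Ayc (I m (F₂ m))⟫) := by
      rw [_root_.map_smul, _root_.map_smul, real_inner_smul_left, real_inner_smul_right]
    rw [hc1, ← hcov (I n (F₁ n)) (I m (F₂ m)), hI1 n m (F₁ n) (F₂ m) x y]
    by_cases h : n = m
    · subst h
      rw [if_pos rfl, if_pos rfl, one_mul, ← mul_assoc, Real.mul_self_sqrt (hl n)]
    · rw [if_neg h, if_neg (Ne.symm h)]
      ring
  have hmain : HasSum (fun n => l n * E n) (∫ ω, ⟪J₁ ω, x⟫ * ⟪J₂ ω, y⟫ ∂P) := by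
    have h2 : HasSum (fun n => ⟪Axc (Real.sqrt (l n) • I n (F₁ n)), Ayc J₂⟫)
        ⟪Axc J₁, Ayc J₂⟫ := by
      have h2a := (innerSL ℝ (Ayc J₂)).hasSum (Axc.hasSum hJ₁)
      simp only [innerSL_apply_apply] at h2a
      have heq : (fun n => ⟪Ayc J₂, Axc (Real.sqrt (l n) • I n (F₁ n))⟫)
          = fun n => ⟪Axc (Real.sqrt (l n) • I n (F₁ n)), Ayc J₂⟫ :=
        funext fun n => real_inner_comm _ _
      rw [heq] at h2a
      rwa [real_inner_comm] at h2a
    have h3 : ∀ n, ⟪Axc (Real.sqrt (l n) • I n (F₁ n)), Ayc J₂⟫ = l n * E n := by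
      intro n
      have hs : HasSum (fun m => ⟪Axc (Real.sqrt (l n) • I n (F₁ n)),
          Ayc (Real.sqrt (l m) • I m (F₂ m))⟫)
          ⟪Axc (Real.sqrt (l n) • I n (F₁ n)), Ayc J₂⟫ := by
        have := (innerSL ℝ (Axc (Real.sqrt (l n) • I n (F₁ n)))).hasSum (Ayc.hasSum hJ₂)
        simpa only [innerSL_apply_apply] using this
      rw [funext (fun m => hterm n m)] at hs
      exact hs.unique (hasSum_ite_eq n (l n * E n))
    rw [hcov J₁ J₂]
    simp only [h3] at h2
    exact h2
  rw [← hmain.tsum_eq]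
  -- now the analytic identity
  set g : ℕ → ℝ → ℝ → ℝ :=
    fun n u v => (l n * ⟪h₁ u (e n), x⟫) * (⟪h₂ v (e n), y⟫ * φ u v) with hgdef
  have hgE : ∀ n, l n * E n = ∫ u, ∫ v, g n u v ∂μ ∂μ := by
    intro n
    have hEn : E n = ∫ u, ∫ v, ⟪h₁ u (e n), x⟫ * ⟪h₂ v (e n), y⟫ * φ u v ∂μ ∂μ := by
      simp only [hEdef]
      refine integral_congr_ae ?_
      filter_upwards [hF₁ n] with u hu
      refine integral_congr_ae ?_
      filter_upwards [hF₂ n] with v hv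
      simp only [hu, hv]
    have inner_eq : ∀ u : ℝ, ∫ v, ⟪h₁ u (e n), x⟫ * ⟪h₂ v (e n), y⟫ * φ u v ∂μ
        = ⟪h₁ u (e n), x⟫ * ∫ v, ⟪h₂ v (e n), y⟫ * φ u v ∂μ := by
      intro u
      simp only [mul_assoc]
      exact integral_const_mul _ _
    have inner_eq2 : ∀ u : ℝ, ∫ v, g n u v ∂μ
        = (l n * ⟪h₁ u (e n), x⟫) * ∫ v, ⟪h₂ v (e n), y⟫ * φ u v ∂μ := by
      intro u
      simp only [hgdef]
      exact integral_const_mul _ _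
    rw [hEn]
    calc l n * ∫ u, ∫ v, ⟪h₁ u (e n), x⟫ * ⟪h₂ v (e n), y⟫ * φ u v ∂μ ∂μ
        = ∫ u, l n * ∫ v, ⟪h₁ u (e n), x⟫ * ⟪h₂ v (e n), y⟫ * φ u v ∂μ ∂μ :=
          (integral_const_mul _ _).symm
      _ = ∫ u, ∫ v, g n u v ∂μ ∂μ := by
          refine integral_congr_ae (Filter.Eventually.of_forall fun u => ?_)
          simp only [inner_eq, inner_eq2]
          ring
  have hpt : ∀ u v, HasSum (fun n => g n u v)
      (⟪h₂ v (Q (ContinuousLinearMap.adjoint (h₁ u) x)), y⟫ * φ u v) := by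
    intro u v
    have h0 := hQ (ContinuousLinearMap.adjoint (h₁ u) x)
    have h1 := ((innerSL ℝ y).comp (h₂ v)).hasSum h0
    have h2 := h1.mul_right (φ u v)
    have hfun : ∀ n, ((innerSL ℝ y).comp (h₂ v))
        ((l n * ⟪ContinuousLinearMap.adjoint (h₁ u) x, e n⟫) • (e n : U)) * φ u v
          = g n u v := by
      intro n
      simp only [hgdef, ContinuousLinearMap.comp_apply, _root_.map_smul, innerSL_apply_apply, smul_eq_mul]
      rw [ContinuousLinearMap.adjoint_inner_left]
      rw [real_inner_comm x (h₁ u (e n)), real_inner_comm y (h₂ v (e n))]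
      ring
    have hval : ((innerSL ℝ y).comp (h₂ v)) (Q (ContinuousLinearMap.adjoint (h₁ u) x)) * φ u v
        = ⟪h₂ v (Q (ContinuousLinearMap.adjoint (h₁ u) x)), y⟫ * φ u v := by
      simp only [ContinuousLinearMap.comp_apply, innerSL_apply_apply]
      rw [real_inner_comm]
    rw [show (fun n => ((innerSL ℝ y).comp (h₂ v))
        ((l n * ⟪ContinuousLinearMap.adjoint (h₁ u) x, e n⟫) • (e n : U)) * φ u v)
          = fun n => g n u v from funext hfun] at h2
    rwa [hval] at h2
  have hlsum : Summable l := by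
    have h0 : Filter.Tendsto (fun n => Real.sqrt (l n)) Filter.atTop (nhds 0) :=
      hsum.tendsto_atTop_zero
    have h1 : ∀ᶠ n in Filter.atTop, Real.sqrt (l n) ≤ 1 :=
      h0.eventually (eventually_le_nhds (by norm_num))
    obtain ⟨N, hN⟩ := Filter.eventually_atTop.mp h1
    rw [← summable_nat_add_iff N]
    refine Summable.of_nonneg_of_le (fun n => hl _) (fun n => ?_)
      ((summable_nat_add_iff N).mpr hsum)
    have h2 : Real.sqrt (l (n + N)) ≤ 1 := hN _ (Nat.le_add_left _ _)
    calc l (n + N) = Real.sqrt (l (n + N)) * Real.sqrt (l (n + N)) :=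
          (Real.mul_self_sqrt (hl _)).symm
      _ ≤ 1 * Real.sqrt (l (n + N)) := mul_le_mul_of_nonneg_right h2 (Real.sqrt_nonneg _)
      _ = Real.sqrt (l (n + N)) := one_mul _
  have hSfin : (∑' n, ENNReal.ofReal (l n)) ≠ ∞ := by
    rw [← ENNReal.ofReal_tsum_of_nonneg hl hlsum]
    exact ENNReal.ofReal_ne_top
  -- measurability of pieces
  have ha₁ : ∀ n, AEStronglyMeasurable (fun u => ⟪h₁ u (e n), x⟫) μ := by
    intro n
    have hc : Continuous (fun A : U →L[ℝ] H => ⟪A (e n), x⟫) := by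
      exact (continuous_inner.comp ((ContinuousLinearMap.apply ℝ H (e n)).continuous.prodMk
        continuous_const))
    exact hc.comp_aestronglyMeasurable hh₁m
  have ha₂ : ∀ n, AEStronglyMeasurable (fun v => ⟪h₂ v (e n), y⟫) μ := by
    intro n
    have hc : Continuous (fun A : U →L[ℝ] H => ⟪A (e n), y⟫) := by
      exact (continuous_inner.comp ((ContinuousLinearMap.apply ℝ H (e n)).continuous.prodMk
        continuous_const))
    exact hc.comp_aestronglyMeasurable hh₂m
  have hφsec : ∀ u, Measurable (φ u) := fun u => hφmeas.comp measurable_prodMk_left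
  have hgmeas : ∀ n u, AEStronglyMeasurable (fun v => g n u v) μ := by
    intro n u
    exact (((ha₂ n).mul (hφsec u).aestronglyMeasurable).const_mul _)
  have hgprod : ∀ n, AEStronglyMeasurable (fun z : ℝ × ℝ => g n z.1 z.2) (μ.prod μ) := by
    intro n
    refine AEStronglyMeasurable.mul ?_ ?_
    · exact ((ha₁ n).comp_fst).const_mul _
    · exact ((ha₂ n).comp_snd).mul hφmeas.aestronglyMeasurable
  -- the inner lintegral bound
  have hgbound : ∀ (n : ℕ) (u : ℝ), ‖h₁ u‖ ≤ b u →
      ∫⁻ v, ‖g n u v‖₊ ∂μ ≤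
        ENNReal.ofReal (l n * (‖x‖ * ‖y‖)) * (ENNReal.ofReal (b u) * Φ u) := by
    intro n u hu
    have hmono : ∀ᵐ v ∂μ, (‖g n u v‖₊ : ℝ≥0∞)
        ≤ ENNReal.ofReal (l n * (‖x‖ * ‖y‖)) *
          (ENNReal.ofReal (b u) * ENNReal.ofReal (b v * |φ u v|)) := by
      filter_upwards [hb1] with v hv
      have ha : |⟪h₁ u (e n), x⟫| ≤ b u * ‖x‖ := by
        refine le_trans (abs_real_inner_le_norm _ _) ?_
        refine mul_le_mul_of_nonneg_right ?_ (norm_nonneg x)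
        have h5 : ‖h₁ u (e n)‖ ≤ ‖h₁ u‖ := by
          have := (h₁ u).le_opNorm (e n)
          rwa [e.orthonormal.1 n, mul_one] at this
        exact le_trans h5 hu
      have hcv : |⟪h₂ v (e n), y⟫| ≤ b v * ‖y‖ := by
        refine le_trans (abs_real_inner_le_norm _ _) ?_
        refine mul_le_mul_of_nonneg_right ?_ (norm_nonneg y)
        have h5 : ‖h₂ v (e n)‖ ≤ ‖h₂ v‖ := by
          have := (h₂ v).le_opNorm (e n)
          rwa [e.orthonormal.1 n, mul_one] at this
        exact le_trans h5 hv.2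
      have hreal : |g n u v| ≤ (l n * (‖x‖ * ‖y‖)) * (b u * (b v * |φ u v|)) := by
        simp only [hgdef, abs_mul, abs_of_nonneg (hl n)]
        calc l n * |⟪h₁ u (e n), x⟫| * (|⟪h₂ v (e n), y⟫| * |φ u v|)
            ≤ l n * (b u * ‖x‖) * ((b v * ‖y‖) * |φ u v|) := by
              exact mul_le_mul (mul_le_mul_of_nonneg_left ha (hl n))
                (mul_le_mul_of_nonneg_right hcv (abs_nonneg _))
                (mul_nonneg (abs_nonneg _) (abs_nonneg _))
                (mul_nonneg (hl n) (mul_nonneg (hbnn u) (norm_nonneg x)))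
          _ = (l n * (‖x‖ * ‖y‖)) * (b u * (b v * |φ u v|)) := by ring
      calc (‖g n u v‖₊ : ℝ≥0∞) = ENNReal.ofReal |g n u v| := by
            rw [← Real.norm_eq_abs]; exact (ofReal_norm _).symm
        _ ≤ ENNReal.ofReal ((l n * (‖x‖ * ‖y‖)) * (b u * (b v * |φ u v|))) :=
            ENNReal.ofReal_le_ofReal hreal
        _ = ENNReal.ofReal (l n * (‖x‖ * ‖y‖)) *
              (ENNReal.ofReal (b u) * ENNReal.ofReal (b v * |φ u v|)) := by
            rw [ENNReal.ofReal_mul (mul_nonneg (hl n) (by positivity)), ENNReal.ofReal_mul (hbnn u)]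
    calc ∫⁻ v, ‖g n u v‖₊ ∂μ
        ≤ ∫⁻ v, ENNReal.ofReal (l n * (‖x‖ * ‖y‖)) *
            (ENNReal.ofReal (b u) * ENNReal.ofReal (b v * |φ u v|)) ∂μ :=
          lintegral_mono_ae hmono
      _ = ENNReal.ofReal (l n * (‖x‖ * ‖y‖)) * (ENNReal.ofReal (b u) * Φ u) := by
          rw [lintegral_const_mul' _ _ ENNReal.ofReal_ne_top,
            lintegral_const_mul' _ _ ENNReal.ofReal_ne_top]
  have hswapA : ∀ᵐ u ∂μ, ∫ v, (∑' n, g n u v) ∂μ = ∑' n, ∫ v, g n u v ∂μ := by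
    filter_upwards [hae1, hb1] with u hu1 hu2
    refine integral_tsum (fun n => hgmeas n u) ?_
    have hle : ∑' n, ∫⁻ v, ‖g n u v‖₊ ∂μ
        ≤ (∑' n, ENNReal.ofReal (l n)) *
          (ENNReal.ofReal (‖x‖ * ‖y‖) * (ENNReal.ofReal (b u) * Φ u)) := by
      calc ∑' n, ∫⁻ v, ‖g n u v‖₊ ∂μ
          ≤ ∑' n, ENNReal.ofReal (l n * (‖x‖ * ‖y‖)) * (ENNReal.ofReal (b u) * Φ u) :=
            ENNReal.tsum_le_tsum (fun n => hgbound n u hu2.1)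
        _ = (∑' n, ENNReal.ofReal (l n)) *
            (ENNReal.ofReal (‖x‖ * ‖y‖) * (ENNReal.ofReal (b u) * Φ u)) := by
            simp_rw [ENNReal.ofReal_mul (hl _), mul_assoc]
            rw [ENNReal.tsum_mul_right]
    exact ne_top_of_le_ne_top
      (ENNReal.mul_ne_top hSfin (ENNReal.mul_ne_top ENNReal.ofReal_ne_top hu1.ne)) hle
  have hswapB : ∫ u, (∑' n, ∫ v, g n u v ∂μ) ∂μ = ∑' n, ∫ u, ∫ v, g n u v ∂μ ∂μ := by
    refine integral_tsum (fun n => (hgprod n).integral_prod_right') ?_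
    have hone : ∀ n, ∫⁻ u, ‖∫ v, g n u v ∂μ‖₊ ∂μ
        ≤ ENNReal.ofReal (l n * (‖x‖ * ‖y‖)) * ENNReal.ofReal K := by
      intro n
      calc ∫⁻ u, (‖∫ v, g n u v ∂μ‖₊ : ℝ≥0∞) ∂μ
          ≤ ∫⁻ u, ∫⁻ v, ‖g n u v‖₊ ∂μ ∂μ :=
            lintegral_mono (fun u => enorm_integral_le_lintegral_enorm _)
        _ ≤ ∫⁻ u, ENNReal.ofReal (l n * (‖x‖ * ‖y‖)) * (ENNReal.ofReal (b u) * Φ u) ∂μ := by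
            refine lintegral_mono_ae ?_
            filter_upwards [hb1] with u hu
            exact hgbound n u hu.1
        _ = ENNReal.ofReal (l n * (‖x‖ * ‖y‖)) * ∫⁻ u, ENNReal.ofReal (b u) * Φ u ∂μ :=
            lintegral_const_mul' _ _ ENNReal.ofReal_ne_top
        _ ≤ ENNReal.ofReal (l n * (‖x‖ * ‖y‖)) * ENNReal.ofReal K := mul_le_mul_right hLfin _
    have hle : ∑' n, ∫⁻ u, ‖∫ v, g n u v ∂μ‖₊ ∂μ
        ≤ (∑' n, ENNReal.ofReal (l n)) * (ENNReal.ofReal (‖x‖ * ‖y‖) * ENNReal.ofReal K) := by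
      calc ∑' n, ∫⁻ u, ‖∫ v, g n u v ∂μ‖₊ ∂μ
          ≤ ∑' n, ENNReal.ofReal (l n * (‖x‖ * ‖y‖)) * ENNReal.ofReal K :=
            ENNReal.tsum_le_tsum hone
        _ = (∑' n, ENNReal.ofReal (l n)) *
            (ENNReal.ofReal (‖x‖ * ‖y‖) * ENNReal.ofReal K) := by
            simp_rw [ENNReal.ofReal_mul (hl _), mul_assoc]
            rw [ENNReal.tsum_mul_right]
    exact ne_top_of_le_ne_top
      (ENNReal.mul_ne_top hSfin
        (ENNReal.mul_ne_top ENNReal.ofReal_ne_top ENNReal.ofReal_ne_top)) hle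
  calc ∑' n, l n * E n = ∑' n, ∫ u, ∫ v, g n u v ∂μ ∂μ := tsum_congr hgE
    _ = ∫ u, (∑' n, ∫ v, g n u v ∂μ) ∂μ := hswapB.symm
    _ = ∫ u, ∫ v, (∑' n, g n u v) ∂μ ∂μ := (integral_congr_ae hswapA).symm
    _ = ∫ u, ∫ v, ⟪h₂ v (Q (ContinuousLinearMap.adjoint (h₁ u) x)), y⟫ * φ u v ∂μ ∂μ := by
        refine integral_congr_ae (Filter.Eventually.of_forall fun u => ?_)
        refine integral_congr_ae (Filter.Eventually.of_forall fun v => ?_)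
        exact (hpt u v).tsum_eq

/-- Given component integrals `I_n : L^p([0,T];H) → L²(Ω;H)` which are
pairwise uncorrelated copies of the stochastic integral w.r.t. a kernel `φ` satisfying
`(C_R)`, and weights `λ_n ≥ 0` with `∑ √λ_n < ∞`, for `h₁, h₂ ∈ L^p([0,T];L(U,H))` the
series `J(h_i) = ∑_n √λ_n I_n(h_i(·)e_n)` converge in `L²(Ω;H)` and for all `x, y ∈ H`:
`E[⟨J(h₁),x⟩⟨J(h₂),y⟩] = ∫_0^T ∫_0^T ⟨h₂(s') Q h₁(s)^* x, y⟩ φ(s,s') ds ds'`,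
where `Q z = ∑_n λ_n ⟨z,e_n⟩ e_n`. -/
theorem stmt_15
    {U : Type*} [NormedAddCommGroup U] [InnerProductSpace ℝ U] [CompleteSpace U]
    [SecondCountableTopology U]
    {H : Type*} [NormedAddCommGroup H] [InnerProductSpace ℝ H] [CompleteSpace H]
    [SecondCountableTopology H]
    {Ω : Type*} [MeasurableSpace Ω] (P : Measure Ω) [IsProbabilityMeasure P]
    (T : ℝ) (hT : 0 < T) (φ : ℝ → ℝ → ℝ) (hφmeas : Measurable (Function.uncurry φ))
    (hφsymm : ∀ u v, φ u v = φ v u)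
    (p : ℝ) (hp : 1 < p) [Fact (1 ≤ ENNReal.ofReal p)] (C : ℝ) (hC : 0 < C)
    (hCR : ∀ f : ℝ → ℝ, MemLp f (ENNReal.ofReal p) (volume.restrict (Set.Icc 0 T)) →
      ∫⁻ u in Set.Icc (0 : ℝ) T, ∫⁻ v in Set.Icc (0 : ℝ) T,
          ENNReal.ofReal |f u * f v * φ u v|
        ≤ ENNReal.ofReal
            (C * ((∫ u in Set.Icc (0 : ℝ) T, |f u| ^ p) ^ (1 / p)) ^ 2))
    (e : HilbertBasis ℕ ℝ U)
    (l : ℕ → ℝ) (hl : ∀ n, 0 ≤ l n) (hsum : Summable (fun n => Real.sqrt (l n)))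
    (Q : U →L[ℝ] U) (hQ : ∀ z : U, HasSum (fun n => (l n * ⟪z, e n⟫) • (e n : U)) (Q z))
    (I : ℕ → (Lp H (ENNReal.ofReal p) (volume.restrict (Set.Icc (0 : ℝ) T)) →ₗ[ℝ] Lp H 2 P))
    (hI1 : ∀ (n m : ℕ)
      (f h : Lp H (ENNReal.ofReal p) (volume.restrict (Set.Icc (0 : ℝ) T))) (x y : H),
      ∫ ω, ⟪(I n f) ω, x⟫ * ⟪(I m h) ω, y⟫ ∂P
        = (if n = m then (1 : ℝ) else 0) *
            ∫ u in Set.Icc (0 : ℝ) T, ∫ v in Set.Icc (0 : ℝ) T,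
              ⟪f u, x⟫ * ⟪h v, y⟫ * φ u v)
    (hI2 : ∀ (n : ℕ)
      (f h : Lp H (ENNReal.ofReal p) (volume.restrict (Set.Icc (0 : ℝ) T))),
      ∫ ω, ⟪(I n f) ω, (I n h) ω⟫ ∂P
        = ∫ u in Set.Icc (0 : ℝ) T, ∫ v in Set.Icc (0 : ℝ) T, ⟪f u, h v⟫ * φ u v)
    (h₁ h₂ : ℝ → (U →L[ℝ] H))
    (hh₁ : MemLp h₁ (ENNReal.ofReal p) (volume.restrict (Set.Icc (0 : ℝ) T)))
    (hh₂ : MemLp h₂ (ENNReal.ofReal p) (volume.restrict (Set.Icc (0 : ℝ) T)))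
    (F₁ F₂ : ℕ → Lp H (ENNReal.ofReal p) (volume.restrict (Set.Icc (0 : ℝ) T)))
    (hF₁ : ∀ n, (F₁ n : ℝ → H) =ᵐ[volume.restrict (Set.Icc (0 : ℝ) T)] fun s => h₁ s (e n))
    (hF₂ : ∀ n, (F₂ n : ℝ → H) =ᵐ[volume.restrict (Set.Icc (0 : ℝ) T)] fun s => h₂ s (e n)) :
    ∃ J₁ J₂ : Lp H 2 P,
      HasSum (fun n => Real.sqrt (l n) • I n (F₁ n)) J₁ ∧
      HasSum (fun n => Real.sqrt (l n) • I n (F₂ n)) J₂ ∧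
      ∀ x y : H,
        ∫ ω, ⟪J₁ ω, x⟫ * ⟪J₂ ω, y⟫ ∂P
          = ∫ u in Set.Icc (0 : ℝ) T, ∫ v in Set.Icc (0 : ℝ) T,
              ⟪h₂ v (Q (ContinuousLinearMap.adjoint (h₁ u) x)), y⟫ * φ u v := by

  classical
  have hfin : IsFiniteMeasure (volume.restrict (Set.Icc (0 : ℝ) T)) := by
    constructor
    rw [Measure.restrict_apply_univ]
    simp [Real.volume_Icc]
  haveI := hfin
  -- construct the dominating function
  have hb₀mem : MemLp (fun u => ‖h₁ u‖ + ‖h₂ u‖) (ENNReal.ofReal p)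
      (volume.restrict (Set.Icc (0 : ℝ) T)) := hh₁.norm.add hh₂.norm
  set b : ℝ → ℝ := fun u => max (hb₀mem.aestronglyMeasurable.mk _ u) 0 with hbdef
  have hbmeas : Measurable b :=
    hb₀mem.aestronglyMeasurable.stronglyMeasurable_mk.measurable.max measurable_const
  have hbnn : ∀ u, 0 ≤ b u := fun u => le_max_right _ _
  have hbae : (fun u => ‖h₁ u‖ + ‖h₂ u‖) =ᵐ[volume.restrict (Set.Icc (0 : ℝ) T)] b := by
    filter_upwards [hb₀mem.aestronglyMeasurable.ae_eq_mk] with u hu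
    have h0 : 0 ≤ ‖h₁ u‖ + ‖h₂ u‖ := by positivity
    simp only [hbdef, ← hu, max_eq_left h0]
  have hbmem : MemLp b (ENNReal.ofReal p) (volume.restrict (Set.Icc (0 : ℝ) T)) :=
    hb₀mem.ae_eq hbae
  have hb1 : ∀ᵐ u ∂(volume.restrict (Set.Icc (0 : ℝ) T)), ‖h₁ u‖ ≤ b u ∧ ‖h₂ u‖ ≤ b u := by
    filter_upwards [hbae] with u hu
    refine ⟨?_, ?_⟩
    · rw [← hu]; exact le_add_of_nonneg_right (norm_nonneg _)
    · rw [← hu]; exact le_add_of_nonneg_left (norm_nonneg _)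
  have hK0 : 0 ≤ C * ((∫ u in Set.Icc (0 : ℝ) T, |b u| ^ p) ^ (1 / p)) ^ 2 := by positivity
  exact stmt_15_aux P (volume.restrict (Set.Icc (0 : ℝ) T)) φ hφmeas (ENNReal.ofReal p)
    e l hl hsum Q hQ I hI1 hI2 h₁ h₂ hh₁.aestronglyMeasurable hh₂.aestronglyMeasurable
    b hbmeas hbnn hb1 _ hK0 (hCR b hbmem) F₁ F₂ hF₁ hF₂
end

section
/- Let T > 0, let φ : [0,T]² → ℝ be a measurable symmetric kernel satisfying condition (C_R) with exponent p ∈ (1,∞) and constant C > 0, let (U,⟨·,·⟩_U) and (H,⟨·,·⟩_H) be separable real Hilbert spaces, (e_n) an orthonormal basis of U, and (λ_n) nonnegative reals with ∑_n √λ_n < ∞. For each n let I_n : L^p([0,T];H) → L²(Ω;H) be a linear map satisfying, for all f, h ∈ L^p([0,T];H): E⟨I_n f, I_m h⟩_H = δ_{nm} ∫_0^T ∫_0^T ⟨f(s), h(s')⟩_H φ(s,s') ds ds'. Then for every h_1, h_2 ∈ L^p([0,T];L(U,H)) the series J(h_i) := ∑_n √λ_n I_n(h_i(·)e_n) converges in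 L²(Ω;H) and E⟨J(h_1), J(h_2)⟩_H = ∑_n λ_n ∫_0^T ∫_0^T ⟨h_1(s) e_n, h_2(s') e_n⟩_H φ(s,s') ds ds' (all series converging absolutely). -/
open MeasureTheory Set
open scoped RealInnerProductSpace ENNReal

/-- Given component integrals `I_n : L^p([0,T];H) → L²(Ω;H)` with
`E⟨I_n f, I_m h⟩ = δ_{nm} ∫∫ ⟨f(s),h(s')⟩ φ(s,s') ds ds'` for a kernel `φ` satisfying
`(C_R)`, and weights `λ_n ≥ 0` with `∑ √λ_n < ∞`, for `h₁, h₂ ∈ L^p([0,T];L(U,H))` the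
series `J(h_i) = ∑_n √λ_n I_n(h_i(·)e_n)` converge in `L²(Ω;H)` and
`E⟨J(h₁), J(h₂)⟩ = ∑_n λ_n ∫_0^T ∫_0^T ⟨h₁(s)e_n, h₂(s')e_n⟩ φ(s,s') ds ds'`,
with absolute convergence of the series on the right. -/
theorem stmt_16
    {U : Type*} [NormedAddCommGroup U] [InnerProductSpace ℝ U] [CompleteSpace U]
    [SecondCountableTopology U]
    {H : Type*} [NormedAddCommGroup H] [InnerProductSpace ℝ H] [CompleteSpace H]
    [SecondCountableTopology H]
    {Ω : Type*} [MeasurableSpace Ω] (P : Measure Ω) [IsProbabilityMeasure P]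
    (T : ℝ) (hT : 0 < T) (φ : ℝ → ℝ → ℝ) (hφmeas : Measurable (Function.uncurry φ))
    (hφsymm : ∀ u v, φ u v = φ v u)
    (p : ℝ) (hp : 1 < p) [Fact (1 ≤ ENNReal.ofReal p)] (C : ℝ) (hC : 0 < C)
    (hCR : ∀ f : ℝ → ℝ, MemLp f (ENNReal.ofReal p) (volume.restrict (Set.Icc 0 T)) →
      ∫⁻ u in Set.Icc (0 : ℝ) T, ∫⁻ v in Set.Icc (0 : ℝ) T,
          ENNReal.ofReal |f u * f v * φ u v|
        ≤ ENNReal.ofReal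
            (C * ((∫ u in Set.Icc (0 : ℝ) T, |f u| ^ p) ^ (1 / p)) ^ 2))
    (e : HilbertBasis ℕ ℝ U)
    (l : ℕ → ℝ) (hl : ∀ n, 0 ≤ l n) (hsum : Summable (fun n => Real.sqrt (l n)))
    (I : ℕ → (Lp H (ENNReal.ofReal p) (volume.restrict (Set.Icc (0 : ℝ) T)) →ₗ[ℝ] Lp H 2 P))
    (hI : ∀ (n m : ℕ)
      (f h : Lp H (ENNReal.ofReal p) (volume.restrict (Set.Icc (0 : ℝ) T))),
      ∫ ω, ⟪(I n f) ω, (I m h) ω⟫ ∂P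
        = (if n = m then (1 : ℝ) else 0) *
            ∫ u in Set.Icc (0 : ℝ) T, ∫ v in Set.Icc (0 : ℝ) T, ⟪f u, h v⟫ * φ u v)
    (h₁ h₂ : ℝ → (U →L[ℝ] H))
    (hh₁ : MemLp h₁ (ENNReal.ofReal p) (volume.restrict (Set.Icc (0 : ℝ) T)))
    (hh₂ : MemLp h₂ (ENNReal.ofReal p) (volume.restrict (Set.Icc (0 : ℝ) T)))
    (F₁ F₂ : ℕ → Lp H (ENNReal.ofReal p) (volume.restrict (Set.Icc (0 : ℝ) T)))
    (hF₁ : ∀ n, (F₁ n : ℝ → H) =ᵐ[volume.restrict (Set.Icc (0 : ℝ) T)] fun s => h₁ s (e n))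
    (hF₂ : ∀ n, (F₂ n : ℝ → H) =ᵐ[volume.restrict (Set.Icc (0 : ℝ) T)] fun s => h₂ s (e n)) :
    ∃ J₁ J₂ : Lp H 2 P,
      HasSum (fun n => Real.sqrt (l n) • I n (F₁ n)) J₁ ∧
      HasSum (fun n => Real.sqrt (l n) • I n (F₂ n)) J₂ ∧
      Summable (fun n => |l n *
        ∫ u in Set.Icc (0 : ℝ) T, ∫ v in Set.Icc (0 : ℝ) T,
          ⟪h₁ u (e n), h₂ v (e n)⟫ * φ u v|) ∧
      ∫ ω, ⟪J₁ ω, J₂ ω⟫ ∂P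
        = ∑' n, l n *
            ∫ u in Set.Icc (0 : ℝ) T, ∫ v in Set.Icc (0 : ℝ) T,
              ⟪h₁ u (e n), h₂ v (e n)⟫ * φ u v := by
  classical
  set f₀ : ℝ → ℝ := fun u => ‖h₁ u‖ + ‖h₂ u‖ with hf₀
  have hf₀nonneg : ∀ u, 0 ≤ f₀ u := fun u => add_nonneg (norm_nonneg _) (norm_nonneg _)
  have hf₀mem : MemLp f₀ (ENNReal.ofReal p) (volume.restrict (Set.Icc (0:ℝ) T)) := hh₁.norm.add hh₂.norm
  set D : ℝ := C * ((∫ u in Set.Icc (0:ℝ) T, |f₀ u| ^ p) ^ (1/p)) ^ 2 with hD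
  have hD0 : 0 ≤ D := mul_nonneg hC.le (sq_nonneg _)
  have hCR₀ := hCR f₀ hf₀mem
  -- the key analytic bound
  have key : ∀ (A B : ℝ → H), (∀ᵐ u ∂(volume.restrict (Set.Icc (0:ℝ) T)), ‖A u‖ ≤ f₀ u) → (∀ᵐ v ∂(volume.restrict (Set.Icc (0:ℝ) T)), ‖B v‖ ≤ f₀ v) →
      |∫ u in Set.Icc (0:ℝ) T, ∫ v in Set.Icc (0:ℝ) T, ⟪A u, B v⟫ * φ u v| ≤ D := by
    intro A B hA hB
    have step : (ENNReal.ofReal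
        |∫ u in Set.Icc (0:ℝ) T, ∫ v in Set.Icc (0:ℝ) T, ⟪A u, B v⟫ * φ u v|)
        ≤ ENNReal.ofReal D := by
      calc ENNReal.ofReal |∫ u in Set.Icc (0:ℝ) T, ∫ v in Set.Icc (0:ℝ) T, ⟪A u, B v⟫ * φ u v|
          = (‖∫ u in Set.Icc (0:ℝ) T, ∫ v in Set.Icc (0:ℝ) T, ⟪A u, B v⟫ * φ u v‖₊ : ℝ≥0∞) := by
            rw [← Real.norm_eq_abs]; exact ofReal_norm _
        _ ≤ ∫⁻ u in Set.Icc (0:ℝ) T, ‖∫ v in Set.Icc (0:ℝ) T, ⟪A u, B v⟫ * φ u v‖₊ :=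
            enorm_integral_le_lintegral_enorm _
        _ ≤ ∫⁻ u in Set.Icc (0:ℝ) T, ∫⁻ v in Set.Icc (0:ℝ) T, ‖⟪A u, B v⟫ * φ u v‖₊ :=
            lintegral_mono fun u => enorm_integral_le_lintegral_enorm _
        _ ≤ ∫⁻ u in Set.Icc (0:ℝ) T, ∫⁻ v in Set.Icc (0:ℝ) T,
              ENNReal.ofReal |f₀ u * f₀ v * φ u v| := by
            refine lintegral_mono_ae ?_
            filter_upwards [hA] with u hu
            refine lintegral_mono_ae ?_
            filter_upwards [hB] with v hv
            rw [show ((‖⟪A u, B v⟫ * φ u v‖₊ : NNReal) : ℝ≥0∞) = ENNReal.ofReal |⟪A u, B v⟫ * φ u v| from by rw [← Real.norm_eq_abs]; exact (ofReal_norm _).symm]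
            apply ENNReal.ofReal_le_ofReal
            have h1 : |⟪A u, B v⟫ * φ u v| ≤ (f₀ u * f₀ v) * |φ u v| := by
              rw [abs_mul]
              have := abs_real_inner_le_norm (A u) (B v)
              refine mul_le_mul ?_ le_rfl (abs_nonneg _) (mul_nonneg (hf₀nonneg u) (hf₀nonneg v))
              exact this.trans (mul_le_mul hu hv (norm_nonneg _) (hf₀nonneg u))
            have h2 : |f₀ u * f₀ v * φ u v| = (f₀ u * f₀ v) * |φ u v| := by
              rw [abs_mul, abs_of_nonneg (mul_nonneg (hf₀nonneg u) (hf₀nonneg v))]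
            rw [h2]; exact h1
        _ ≤ ENNReal.ofReal D := hCR₀
    exact (ENNReal.ofReal_le_ofReal_iff hD0).mp step
  -- a.e. bounds for the F's
  have hbound₁ : ∀ n, ∀ᵐ u ∂(volume.restrict (Set.Icc (0:ℝ) T)), ‖(F₁ n : ℝ → H) u‖ ≤ f₀ u := by
    intro n
    filter_upwards [hF₁ n] with u hu
    rw [hu]
    calc ‖h₁ u (e n)‖ ≤ ‖h₁ u‖ * ‖e n‖ := (h₁ u).le_opNorm (e n)
      _ = ‖h₁ u‖ := by rw [e.orthonormal.1 n, mul_one]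
      _ ≤ f₀ u := le_add_of_nonneg_right (norm_nonneg _)
  have hbound₂ : ∀ n, ∀ᵐ u ∂(volume.restrict (Set.Icc (0:ℝ) T)), ‖(F₂ n : ℝ → H) u‖ ≤ f₀ u := by
    intro n
    filter_upwards [hF₂ n] with u hu
    rw [hu]
    calc ‖h₂ u (e n)‖ ≤ ‖h₂ u‖ * ‖e n‖ := (h₂ u).le_opNorm (e n)
      _ = ‖h₂ u‖ := by rw [e.orthonormal.1 n, mul_one]
      _ ≤ f₀ u := le_add_of_nonneg_left (norm_nonneg _)
  -- norms of the I n terms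
  have hnorm : ∀ n (G : ℕ → Lp H (ENNReal.ofReal p) (volume.restrict (Set.Icc (0:ℝ) T))),
      (∀ m, ∀ᵐ u ∂(volume.restrict (Set.Icc (0:ℝ) T)), ‖(G m : ℝ → H) u‖ ≤ f₀ u) → ‖I n (G n)‖ ≤ Real.sqrt D := by
    intro n G hG
    have h1 : ⟪I n (G n), I n (G n)⟫ =
        ∫ u in Set.Icc (0:ℝ) T, ∫ v in Set.Icc (0:ℝ) T, ⟪(G n : ℝ → H) u, (G n : ℝ → H) v⟫ * φ u v := by
      rw [L2.inner_def, hI n n (G n) (G n), if_pos rfl, one_mul]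
    have h2 : ‖I n (G n)‖ ^ 2 ≤ D := by
      rw [← real_inner_self_eq_norm_sq, h1]
      exact (le_abs_self _).trans (key _ _ (hG n) (hG n))
    calc ‖I n (G n)‖ = Real.sqrt (‖I n (G n)‖ ^ 2) := by
          rw [Real.sqrt_sq (norm_nonneg _)]
      _ ≤ Real.sqrt D := Real.sqrt_le_sqrt h2
  -- summability of the two series
  have hsummable : ∀ (G : ℕ → Lp H (ENNReal.ofReal p) (volume.restrict (Set.Icc (0:ℝ) T))),
      (∀ m, ∀ᵐ u ∂(volume.restrict (Set.Icc (0:ℝ) T)), ‖(G m : ℝ → H) u‖ ≤ f₀ u) →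
      Summable (fun n => Real.sqrt (l n) • I n (G n)) := by
    intro G hG
    apply Summable.of_norm
    refine Summable.of_nonneg_of_le (fun n => norm_nonneg _) (fun n => ?_)
      (hsum.mul_right (Real.sqrt D))
    rw [norm_smul, Real.norm_eq_abs, abs_of_nonneg (Real.sqrt_nonneg _)]
    exact mul_le_mul_of_nonneg_left (hnorm n G hG) (Real.sqrt_nonneg _)
  have hs₁ : Summable (fun n => Real.sqrt (l n) • I n (F₁ n)) := hsummable F₁ hbound₁
  have hs₂ : Summable (fun n => Real.sqrt (l n) • I n (F₂ n)) := hsummable F₂ hbound₂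
  set J₁ : Lp H 2 P := ∑' n, Real.sqrt (l n) • I n (F₁ n) with hJ₁def
  set J₂ : Lp H 2 P := ∑' n, Real.sqrt (l n) • I n (F₂ n) with hJ₂def
  have hJ₁ : HasSum (fun n => Real.sqrt (l n) • I n (F₁ n)) J₁ := hs₁.hasSum
  have hJ₂ : HasSum (fun n => Real.sqrt (l n) • I n (F₂ n)) J₂ := hs₂.hasSum
  -- the target integrals
  set Dn : ℕ → ℝ := fun n => ∫ u in Set.Icc (0:ℝ) T, ∫ v in Set.Icc (0:ℝ) T,
      ⟪h₁ u (e n), h₂ v (e n)⟫ * φ u v with hDn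
  have congrD : ∀ n, (∫ u in Set.Icc (0:ℝ) T, ∫ v in Set.Icc (0:ℝ) T,
      ⟪(F₁ n : ℝ → H) u, (F₂ n : ℝ → H) v⟫ * φ u v) = Dn n := by
    intro n
    refine integral_congr_ae ?_
    filter_upwards [hF₁ n] with u hu
    refine integral_congr_ae ?_
    filter_upwards [hF₂ n] with v hv
    rw [hu, hv]
  have hDnbound : ∀ n, |Dn n| ≤ D := by
    intro n
    refine key (fun u => h₁ u (e n)) (fun v => h₂ v (e n)) ?_ ?_
    · filter_upwards with u
      calc ‖h₁ u (e n)‖ ≤ ‖h₁ u‖ * ‖e n‖ := (h₁ u).le_opNorm (e n)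
        _ = ‖h₁ u‖ := by rw [e.orthonormal.1 n, mul_one]
        _ ≤ f₀ u := le_add_of_nonneg_right (norm_nonneg _)
    · filter_upwards with u
      calc ‖h₂ u (e n)‖ ≤ ‖h₂ u‖ * ‖e n‖ := (h₂ u).le_opNorm (e n)
        _ = ‖h₂ u‖ := by rw [e.orthonormal.1 n, mul_one]
        _ ≤ f₀ u := le_add_of_nonneg_left (norm_nonneg _)
  -- summability of l
  have hlsum : Summable l := by
    refine Summable.of_nonneg_of_le hl (fun n => ?_)
      (hsum.mul_right (∑' m, Real.sqrt (l m)))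
    calc l n = Real.sqrt (l n) * Real.sqrt (l n) := (Real.mul_self_sqrt (hl n)).symm
      _ ≤ Real.sqrt (l n) * ∑' m, Real.sqrt (l m) :=
          mul_le_mul_of_nonneg_left (Summable.le_tsum hsum n (fun m _ => Real.sqrt_nonneg _))
            (Real.sqrt_nonneg _)
  -- inner product of a single term with J₂
  have hinner : ∀ n, ⟪I n (F₁ n), J₂⟫ = Real.sqrt (l n) * Dn n := by
    intro n
    have h1 : HasSum (fun m => ⟪I n (F₁ n), Real.sqrt (l m) • I m (F₂ m)⟫)
        ⟪I n (F₁ n), J₂⟫ := by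
      have := hJ₂.mapL (innerSL ℝ (I n (F₁ n)))
      simpa only [innerSL_apply_apply] using this
    have h2 : (fun m => ⟪I n (F₁ n), Real.sqrt (l m) • I m (F₂ m)⟫)
        = fun m => if m = n then Real.sqrt (l n) * Dn n else 0 := by
      funext m
      rw [real_inner_smul_right, L2.inner_def, hI n m (F₁ n) (F₂ m)]
      by_cases hmn : m = n
      · subst hmn
        rw [if_pos rfl, if_pos rfl, one_mul, congrD m]
      · rw [if_neg (fun h => hmn h.symm), if_neg hmn, zero_mul, mul_zero]
    rw [h2] at h1
    exact h1.unique (hasSum_ite_eq n _)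
  -- the full inner product
  have hfinal : HasSum (fun n => l n * Dn n) ⟪J₁, J₂⟫ := by
    have h1 : HasSum (fun n => ⟪J₂, Real.sqrt (l n) • I n (F₁ n)⟫) ⟪J₂, J₁⟫ :=
      hJ₁.mapL (innerSL ℝ J₂)
    have h2 : (fun n => ⟪J₂, Real.sqrt (l n) • I n (F₁ n)⟫) = fun n => l n * Dn n := by
      funext n
      rw [real_inner_smul_right, real_inner_comm _ J₂, hinner n, ← mul_assoc,
        Real.mul_self_sqrt (hl n)]
    rw [h2] at h1
    rwa [real_inner_comm J₁ J₂] at h1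
  refine ⟨J₁, J₂, hJ₁, hJ₂, ?_, ?_⟩
  · refine Summable.of_nonneg_of_le (fun n => abs_nonneg _) (fun n => ?_) (hlsum.mul_right D)
    rw [abs_mul, abs_of_nonneg (hl n)]
    exact mul_le_mul_of_nonneg_left (hDnbound n) (hl n)
  · calc ∫ ω, ⟪(J₁ : Ω → H) ω, (J₂ : Ω → H) ω⟫ ∂P = ⟪J₁, J₂⟫ := (L2.inner_def J₁ J₂).symm
      _ = ∑' n, l n * Dn n := hfinal.tsum_eq.symm
end

section
/- Let V be a real normed vector space with dual V^* and dual pairing ⟨·,·⟩, let H be a real Hilbert space and ι : V → H a continuous linear map (write ‖v‖_H := ‖ι v‖_H), and let K be a real normed space. Let α ∈ (1,∞), c_1 ∈ ℝ, c_2 ∈ (0,∞), c_3 ∈ [0,∞), f_0 ≥ 0, g_0 ≥ 0, and let A : V → V^* and B : V → K satisfy: (coercivity) 2⟨A(v), v⟩ + ‖B(v)‖_K² ≤ c_1 ‖v‖_H² − c_2 ‖v‖_V^α + f_0 for all v ∈ V; (boundedness) ‖A(v)‖_{V^*} ≤ g_0 + c_3 ‖v‖_V^{α−1} for all v ∈ V.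 Then for every w ∈ V there exist c_1' ∈ ℝ, c_2' ∈ (0,∞) and f' ≥ 0 such that for all v ∈ V: 2⟨A(v+w), v⟩ + ‖B(v+w)‖_K² ≤ c_1' ‖v‖_H² − c_2' ‖v‖_V^α + f'. In other words, the shifted coefficients Ā(v) := A(v+w), B̄(v) := B(v+w) again satisfy the coercivity condition (H3), with constants depending only on c_1, c_2, c_3, f_0, g_0, α and w. -/
private lemma two_rpow_aux {a b p : ℝ} (ha : 0 ≤ a) (hb : 0 ≤ b) (hp : 1 ≤ p) :
    (a + b) ^ p ≤ 2 ^ (p - 1) * (a ^ p + b ^ p) := by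
  have h := NNReal.rpow_add_le_mul_rpow_add_rpow a.toNNReal b.toNNReal hp
  have := (NNReal.coe_le_coe).2 h
  push_cast at this
  rw [Real.coe_toNNReal a ha, Real.coe_toNNReal b hb] at this
  simpa using this

/-- Young-type absorption: for `t ≥ 0`, `a * t^(p-1) ≤ ε t^p + a * (a/ε)^(p-1)`. -/
private lemma young_aux {a ε p : ℝ} (ha : 0 ≤ a) (hε : 0 < ε) (hp : 1 < p)
    {t : ℝ} (ht : 0 ≤ t) :
    a * t ^ (p - 1) ≤ ε * t ^ p + a * (a / ε) ^ (p - 1) := by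
  have hp1 : 0 ≤ p - 1 := by linarith
  rcases le_or_gt t (a / ε) with h | h
  · have h1 : t ^ (p - 1) ≤ (a / ε) ^ (p - 1) := Real.rpow_le_rpow ht h hp1
    have h2 : 0 ≤ ε * t ^ p := mul_nonneg hε.le (Real.rpow_nonneg ht p)
    nlinarith [mul_le_mul_of_nonneg_left h1 ha]
  · have ht' : 0 < t := lt_of_le_of_lt (div_nonneg ha hε.le) h
    have ha' : a ≤ ε * t := by
      rw [div_lt_iff₀ hε] at h; linarith [mul_comm t ε]
    have hts : t ^ p = t * t ^ (p - 1) := by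
      rw [← Real.rpow_one_add' (by positivity) (by intro hc; linarith)]
      ring_nf
    have h1 : a * t ^ (p - 1) ≤ ε * t * t ^ (p - 1) :=
      mul_le_mul_of_nonneg_right ha' (Real.rpow_nonneg ht _)
    have h2 : 0 ≤ a * (a / ε) ^ (p - 1) :=
      mul_nonneg ha (Real.rpow_nonneg (div_nonneg ha hε.le) _)
    rw [hts]; nlinarith

/-- Shift invariance of the coercivity condition (H3): if
`A : V → V^*` and `B : V → K` satisfy
`2⟨A(v),v⟩ + ‖B(v)‖² ≤ c₁‖v‖_H² - c₂‖v‖_V^α + f₀` (coercivity) and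
`‖A(v)‖_{V^*} ≤ g₀ + c₃‖v‖_V^{α-1}` (boundedness), then for every `w ∈ V` the shifted
coefficients `Ā(v) = A(v+w)`, `B̄(v) = B(v+w)` satisfy a coercivity condition of the
same form with new constants `c₁' ∈ ℝ`, `c₂' ∈ (0,∞)`, `f' ≥ 0`. -/
theorem stmt_17
    {V : Type*} [NormedAddCommGroup V] [NormedSpace ℝ V]
    {H : Type*} [NormedAddCommGroup H] [InnerProductSpace ℝ H] [CompleteSpace H]
    {K : Type*} [NormedAddCommGroup K] [NormedSpace ℝ K]
    (ι : V →L[ℝ] H)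
    (α : ℝ) (hα : 1 < α) (c₁ : ℝ) (c₂ : ℝ) (hc₂ : 0 < c₂) (c₃ : ℝ) (hc₃ : 0 ≤ c₃)
    (f₀ : ℝ) (hf₀ : 0 ≤ f₀) (g₀ : ℝ) (hg₀ : 0 ≤ g₀)
    (A : V → (V →L[ℝ] ℝ)) (B : V → K)
    (hcoerc : ∀ v : V, 2 * A v v + ‖B v‖ ^ 2 ≤ c₁ * ‖ι v‖ ^ 2 - c₂ * ‖v‖ ^ α + f₀)
    (hbound : ∀ v : V, ‖A v‖ ≤ g₀ + c₃ * ‖v‖ ^ (α - 1))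
    (w : V) :
    ∃ (c₁' : ℝ) (c₂' : ℝ) (f' : ℝ), 0 < c₂' ∧ 0 ≤ f' ∧
      ∀ v : V, 2 * A (v + w) v + ‖B (v + w)‖ ^ 2
        ≤ c₁' * ‖ι v‖ ^ 2 - c₂' * ‖v‖ ^ α + f' := by
  set a : ℝ := 2 * c₃ * ‖w‖ with ha_def
  have ha : 0 ≤ a := by positivity
  set CY : ℝ := a * (a / (c₂ / 2)) ^ (α - 1) with hCY_def
  have hCY : 0 ≤ CY := mul_nonneg ha (Real.rpow_nonneg (by positivity) _)
  refine ⟨2 * |c₁|, c₂ / 2 * 2 ^ (1 - α), f₀ + 2 * |c₁| * ‖ι w‖ ^ 2 + 2 * g₀ * ‖w‖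
    + CY + c₂ / 2 * ‖w‖ ^ α, by positivity, by positivity, fun v => ?_⟩
  set u : V := v + w with hu_def
  have hAu : A u v = A u u - A u w := by
    have : A u u = A u v + A u w := by rw [hu_def, map_add]
    linarith
  -- bound on |A u w|
  have hAw : |A u w| ≤ (g₀ + c₃ * ‖u‖ ^ (α - 1)) * ‖w‖ := by
    calc |A u w| = ‖A u w‖ := rfl
      _ ≤ ‖A u‖ * ‖w‖ := (A u).le_opNorm w
      _ ≤ (g₀ + c₃ * ‖u‖ ^ (α - 1)) * ‖w‖ :=
          mul_le_mul_of_nonneg_right (hbound u) (norm_nonneg w)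
  have h1 : 2 * A u v + ‖B u‖ ^ 2
      ≤ c₁ * ‖ι u‖ ^ 2 - c₂ * ‖u‖ ^ α + f₀ + 2 * ((g₀ + c₃ * ‖u‖ ^ (α - 1)) * ‖w‖) := by
    have hc := hcoerc u
    have : -(2 * A u w) ≤ 2 * ((g₀ + c₃ * ‖u‖ ^ (α - 1)) * ‖w‖) := by
      have := (abs_le.mp hAw).1
      linarith
    rw [hAu]
    linarith
  -- H-norm bound
  have hH : c₁ * ‖ι u‖ ^ 2 ≤ 2 * |c₁| * ‖ι v‖ ^ 2 + 2 * |c₁| * ‖ι w‖ ^ 2 := by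
    have h2 : ‖ι u‖ ≤ ‖ι v‖ + ‖ι w‖ := by
      rw [hu_def, map_add]; exact norm_add_le _ _
    have h3 : ‖ι u‖ ^ 2 ≤ 2 * ‖ι v‖ ^ 2 + 2 * ‖ι w‖ ^ 2 := by
      nlinarith [h2, sq_nonneg (‖ι v‖ - ‖ι w‖), norm_nonneg (ι u), norm_nonneg (ι v), norm_nonneg (ι w)]
    have h4 : c₁ * ‖ι u‖ ^ 2 ≤ |c₁| * ‖ι u‖ ^ 2 :=
      mul_le_mul_of_nonneg_right (le_abs_self c₁) (by positivity)
    nlinarith [abs_nonneg c₁]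
  -- Young absorption
  have hY : a * ‖u‖ ^ (α - 1) ≤ c₂ / 2 * ‖u‖ ^ α + CY :=
    young_aux ha (by positivity) hα (norm_nonneg u)
  -- V-norm lower bound
  have hV : c₂ / 2 * 2 ^ (1 - α) * ‖v‖ ^ α ≤ c₂ / 2 * ‖u‖ ^ α + c₂ / 2 * ‖w‖ ^ α := by
    have h5 : ‖v‖ ^ α ≤ 2 ^ (α - 1) * (‖u‖ ^ α + ‖w‖ ^ α) := by
      have h6 : ‖v‖ ≤ ‖u‖ + ‖w‖ := by
        have : v = u - w := by rw [hu_def]; abel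
        rw [this]; exact norm_sub_le _ _
      calc ‖v‖ ^ α ≤ (‖u‖ + ‖w‖) ^ α :=
            Real.rpow_le_rpow (norm_nonneg v) h6 (by linarith)
        _ ≤ 2 ^ (α - 1) * (‖u‖ ^ α + ‖w‖ ^ α) :=
            two_rpow_aux (norm_nonneg u) (norm_nonneg w) hα.le
    have h7 : (2:ℝ) ^ (1 - α) * 2 ^ (α - 1) = 1 := by
      rw [← Real.rpow_add (by norm_num)]; norm_num
    have h8 := mul_le_mul_of_nonneg_left h5 (show (0:ℝ) ≤ c₂ / 2 * 2 ^ (1 - α) by positivity)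
    calc c₂ / 2 * 2 ^ (1 - α) * ‖v‖ ^ α
        ≤ c₂ / 2 * 2 ^ (1 - α) * (2 ^ (α - 1) * (‖u‖ ^ α + ‖w‖ ^ α)) := h8
      _ = c₂ / 2 * ((2:ℝ) ^ (1 - α) * 2 ^ (α - 1)) * (‖u‖ ^ α + ‖w‖ ^ α) := by ring
      _ = c₂ / 2 * ‖u‖ ^ α + c₂ / 2 * ‖w‖ ^ α := by rw [h7]; ring
  have hexp : 2 * (c₃ * ‖u‖ ^ (α - 1) * ‖w‖) = a * ‖u‖ ^ (α - 1) := by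
    rw [ha_def]; ring
  nlinarith [h1, hH, hY, hV]
end
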